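/- arXiv:2601.15403 — 6 statements merged into one kernel-verified Lean document; each statement's English description precedes it below -/
import Mathlib

section
/- Let p be a prime, let k be a field of characteristic p, and let a, b, c be distinct elements of {1,…,n}. Then in R, the element (f_{a,b}·f_{b,c})^{p−1} − (x_b·y_b·f_{a,c})^{p−1} lies in the ideal (x_b^p, y_b^p) of R. -/
open MvPolynomial

noncomputable section

namespace BEI

/-- The polynomial ring `k[x_1,…,x_n,y_1,…,y_n]`: variables `Sum.inl i` are the `x_i`,
variables `Sum.inr i` are the `y_i`. -/
abbrev Ring' (k : Type*) [CommRing k] (n : ℕ) : Type _ := MvPolynomial (Fin n ⊕ Fin n) k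

variable {k : Type*} [CommRing k] {n : ℕ}

/-- The variable `x_i`. -/
def xv (i : Fin n) : Ring' k n := X (Sum.inl i)

/-- The variable `y_i`. -/
def yv (i : Fin n) : Ring' k n := X (Sum.inr i)

/-- The binomial `f_{i,j} = x_i y_j - x_j y_i`. -/
def fb (i j : Fin n) : Ring' k n := xv i * yv j - xv j * yv i

/-- In a domain of characteristic `p`, `(u - v)^(p-1) = ∑_{i<p} u^i v^(p-1-i)`. -/
lemma sub_pow_pred {S : Type*} [CommRing S] [IsDomain S] (p : ℕ) (hp : p.Prime)
    [CharP S p] (u v : S) :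
    (u - v) ^ (p - 1) = ∑ i ∈ Finset.range p, u ^ i * v ^ (p - 1 - i) := by
  by_cases h : u = v
  · subst h
    rw [sub_self, zero_pow (by have := hp.one_lt; omega : p - 1 ≠ 0)]
    have he : ∀ i ∈ Finset.range p, u ^ i * u ^ (p-1-i) = u ^ (p-1) := by
      intro i hi
      rw [← pow_add]
      congr 1
      simp only [Finset.mem_range] at hi
      omega
    rw [Finset.sum_congr rfl he, Finset.sum_const, Finset.card_range, nsmul_eq_mul,
      CharP.cast_eq_zero, zero_mul]
  · haveI := Fact.mk hp
    have hne : u - v ≠ 0 := sub_ne_zero.mpr h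
    apply mul_right_cancel₀ hne
    rw [← pow_succ, Nat.sub_add_cancel hp.one_lt.le, sub_pow_char, geom_sum₂_mul]

/-- if `char k = p` and `a, b, c` are distinct, then
`(f_{a,b} f_{b,c})^{p-1} - (x_b y_b f_{a,c})^{p-1} ∈ (x_b^p, y_b^p)`. -/
theorem switching_terms (p : ℕ) (hp : p.Prime) (k : Type*) [Field k] [CharP k p]
    (n : ℕ) (a b c : Fin n) (hab : a ≠ b) (hbc : b ≠ c) (hac : a ≠ c) :
    (fb (k := k) a b * fb b c) ^ (p - 1) - (xv (k := k) b * yv b * fb a c) ^ (p - 1)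
      ∈ Ideal.span {xv (k := k) b ^ p, yv (k := k) b ^ p} := by
  classical
  set I : Ideal (Ring' k n) := Ideal.span {xv (k := k) b ^ p, yv (k := k) b ^ p} with hI
  have hxmem : (xv (k := k) b ^ p : Ring' k n) ∈ I := Ideal.subset_span (by simp)
  have hymem : (yv (k := k) b ^ p : Ring' k n) ∈ I := Ideal.subset_span (by simp)
  -- the general summand
  set T : ℕ → ℕ → Ring' k n := fun i j =>
    (xv a * yv b) ^ i * (xv b * yv a) ^ (p - 1 - i) *
      ((xv b * yv c) ^ j * (xv c * yv b) ^ (p - 1 - j)) with hT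
  have h1 : (fb (k := k) a b * fb b c) ^ (p - 1)
      = ∑ i ∈ Finset.range p, ∑ j ∈ Finset.range p, T i j := by
    rw [mul_pow, fb, fb, sub_pow_pred p hp, sub_pow_pred p hp, Finset.sum_mul_sum]
  have h2 : (xv (k := k) b * yv b * fb a c) ^ (p - 1)
      = ∑ i ∈ Finset.range p, T i i := by
    rw [mul_pow, fb, sub_pow_pred p hp, Finset.mul_sum]
    refine Finset.sum_congr rfl fun i hi => ?_
    simp only [Finset.mem_range] at hi
    obtain ⟨m, hm⟩ : ∃ m, p - 1 = i + m := ⟨p - 1 - i, by have := hp.one_lt; omega⟩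
    rw [hT]
    simp only
    rw [show p - 1 - i = m by omega, hm]
    ring
  rw [h1, h2, ← Finset.sum_sub_distrib]
  refine Ideal.sum_mem _ fun i hi => ?_
  simp only [Finset.mem_range] at hi
  have hsplit : ∑ j ∈ Finset.range p, T i j
      = T i i + ∑ j ∈ (Finset.range p).erase i, T i j :=
    (Finset.add_sum_erase _ _ (Finset.mem_range.mpr hi)).symm
  rw [hsplit, add_sub_cancel_left]
  refine Ideal.sum_mem _ fun j hj => ?_
  simp only [Finset.mem_erase, Finset.mem_range] at hj
  obtain ⟨hji, hjp⟩ := hj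
  rcases lt_or_gt_of_ne hji with hlt | hgt
  · -- j < i : the exponent of y_b, namely i + (p-1-j), is ≥ p
    obtain ⟨d, hd⟩ : ∃ d, i + (p - 1 - j) = p + d := ⟨i + (p-1-j) - p, by omega⟩
    have heq : T i j = yv b ^ (i + (p - 1 - j)) * (xv b ^ (p - 1 - i + j) *
          (xv a ^ i * yv a ^ (p - 1 - i) * yv c ^ j * xv c ^ (p - 1 - j))) := by
      rw [hT]; ring
    rw [heq, hd, pow_add, mul_assoc]
    exact Ideal.mul_mem_right _ _ hymem
  · -- i < j : the exponent of x_b, namely (p-1-i) + j, is ≥ p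
    obtain ⟨d, hd⟩ : ∃ d, (p - 1 - i) + j = p + d := ⟨(p-1-i) + j - p, by omega⟩
    have heq : T i j = xv b ^ (p - 1 - i + j) * (yv b ^ (i + (p - 1 - j)) *
          (xv a ^ i * yv a ^ (p - 1 - i) * yv c ^ j * xv c ^ (p - 1 - j))) := by
      rw [hT]; ring
    rw [heq, hd, pow_add, mul_assoc]
    exact Ideal.mul_mem_right _ _ hxmem

end BEI
end
end

section
/- Let p be a prime and k a field of characteristic p, with n = 3. Then (f_{1,2}·f_{2,3}·f_{1,3})^{p−1} ∈ m^{[p]}, i.e., the (p−1)-st power of the product of the three 2×2 minors of the generic 2×3 matrix lies in the ideal (x_1^p, x_2^p, x_3^p, y_1^p, y_2^p, y_3^p). -/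
open MvPolynomial

noncomputable section

namespace BEI

variable {k : Type*} [CommRing k] {n : ℕ}

/-- The Frobenius power `I^{[p]}`, the ideal generated by the `p`-th powers of all
elements of `I`. -/
def frobPow {A : Type*} [CommSemiring A] (I : Ideal A) (p : ℕ) : Ideal A :=
  Ideal.span ((· ^ p) '' (I : Set A))

/-- The graded maximal ideal `m = (x_1,…,x_n,y_1,…,y_n)`. -/
def maxIdeal (k : Type*) [CommRing k] (n : ℕ) : Ideal (Ring' k n) :=
  Ideal.span (Set.range (X : (Fin n ⊕ Fin n) → Ring' k n))

/-- In a domain of characteristic `p`, `(a-b)^(p-1)` expands with all coefficients `1`. -/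
lemma sub_pow_prime_sub_one {R : Type*} [CommRing R] [IsDomain R] (p : ℕ) [Fact p.Prime]
    [CharP R p] {a b : R} (h : a ≠ b) :
    (a - b) ^ (p - 1) = ∑ i ∈ Finset.range p, a ^ i * b ^ (p - 1 - i) := by
  have hp0 : 0 < p := (Fact.out : p.Prime).pos
  apply mul_right_cancel₀ (sub_ne_zero.mpr h)
  rw [geom_sum₂_mul, ← pow_succ, Nat.sub_add_cancel hp0, sub_pow_char]

lemma triple_sum_mul {R : Type*} [CommRing R] (s t u : Finset ℕ) (A B C : ℕ → R) :
    (∑ i ∈ s, A i) * (∑ j ∈ t, B j) * (∑ l ∈ u, C l)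
      = ∑ i ∈ s, ∑ j ∈ t, ∑ l ∈ u, A i * B j * C l := by
  rw [Finset.sum_mul_sum, Finset.sum_mul]
  refine Finset.sum_congr rfl fun i _ => ?_
  rw [Finset.sum_mul]
  exact Finset.sum_congr rfl fun j _ => Finset.mul_sum _ _ _

lemma main_split {R : Type*} [CommRing R] (I : Ideal R) (p : ℕ) (hp0 : 0 < p)
    (F : ℕ → ℕ → ℕ → R) (M : R) (hM : p • M = 0)
    (hdiag : ∀ i < p, F i i (p - 1 - i) = M)
    (hoff : ∀ i j l, i < p → j < p → l < p → ¬(j = i ∧ l = p - 1 - i) → F i j l ∈ I) :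
    ∑ i ∈ Finset.range p, ∑ j ∈ Finset.range p, ∑ l ∈ Finset.range p, F i j l ∈ I := by
  classical
  have key : ∀ i ∈ Finset.range p,
      (∑ j ∈ Finset.range p, ∑ l ∈ Finset.range p, F i j l) - M ∈ I := by
    intro i hi
    have hiq : i < p := Finset.mem_range.mp hi
    have hmem : p - 1 - i ∈ Finset.range p := Finset.mem_range.mpr (by omega)
    rw [← Finset.add_sum_erase _ _ hi, ← Finset.add_sum_erase _ _ hmem,
      hdiag i hiq]
    have e : ∀ a b : R, M + a + b - M = a + b := fun a b => by ring
    rw [e]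
    refine Ideal.add_mem _ (Ideal.sum_mem _ fun l hl => ?_)
      (Ideal.sum_mem _ fun j hj => Ideal.sum_mem _ fun l hl => ?_)
    · exact hoff i i l hiq hiq (Finset.mem_range.mp (Finset.mem_of_mem_erase hl))
        (fun h => (Finset.ne_of_mem_erase hl) h.2)
    · exact hoff i j l hiq (Finset.mem_range.mp (Finset.mem_of_mem_erase hj))
        (Finset.mem_range.mp hl) (fun h => (Finset.ne_of_mem_erase hj) h.1)
  have htot : (∑ i ∈ Finset.range p, ∑ j ∈ Finset.range p, ∑ l ∈ Finset.range p, F i j l)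
      = (∑ i ∈ Finset.range p,
          ((∑ j ∈ Finset.range p, ∑ l ∈ Finset.range p, F i j l) - M)) + p • M := by
    rw [Finset.sum_sub_distrib, Finset.sum_const, Finset.card_range]
    abel
  rw [htot, hM, add_zero]
  exact Ideal.sum_mem _ key

/-- with `n = 3` and `char k = p`, the `(p-1)`-st power of the product of
the three `2 × 2` minors of the generic `2 × 3` matrix lies in
`m^{[p]} = (x_1^p, x_2^p, x_3^p, y_1^p, y_2^p, y_3^p)`. -/
theorem minors_power_in_frobenius (p : ℕ) (hp : p.Prime) (k : Type*) [Field k] [CharP k p] :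
    (fb (k := k) (0 : Fin 3) 1 * fb (1 : Fin 3) 2 * fb (0 : Fin 3) 2) ^ (p - 1)
      ∈ frobPow (maxIdeal k 3) p := by
  haveI : Fact p.Prime := ⟨hp⟩
  have hp0 : 0 < p := hp.pos
  classical
  set I := frobPow (maxIdeal k 3) p with hI
  -- p-th powers of variables lie in I
  have hXp : ∀ v : Fin 3 ⊕ Fin 3, (X v : Ring' k 3) ^ p ∈ I :=
    fun v => Ideal.subset_span ⟨X v, Ideal.subset_span (Set.mem_range_self v), rfl⟩
  have hdvd : ∀ (v : Fin 3 ⊕ Fin 3) (t : Ring' k 3), X v ^ p ∣ t → t ∈ I := by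
    rintro v t ⟨c, rfl⟩; exact Ideal.mul_mem_right _ _ (hXp v)
  -- the three binomials have distinct monomials
  have hne1 : (X (Sum.inl 0) * X (Sum.inr 1) : Ring' k 3) ≠ X (Sum.inl 1) * X (Sum.inr 0) := by
    intro h
    have h2 := congrArg (eval (Sum.elim ![(1:k),1,0] ![0,1,1])) h
    simp at h2
  have hne2 : (X (Sum.inl 1) * X (Sum.inr 2) : Ring' k 3) ≠ X (Sum.inl 2) * X (Sum.inr 1) := by
    intro h
    have h2 := congrArg (eval (Sum.elim ![(1:k),1,0] ![0,1,1])) h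
    simp at h2
  have hne3 : (X (Sum.inl 0) * X (Sum.inr 2) : Ring' k 3) ≠ X (Sum.inl 2) * X (Sum.inr 0) := by
    intro h
    have h2 := congrArg (eval (Sum.elim ![(1:k),1,0] ![0,1,1])) h
    simp at h2
  -- expansions of the (p-1)-st powers
  have e1 : (fb (k := k) (0 : Fin 3) 1) ^ (p - 1)
      = ∑ i ∈ Finset.range p, (X (Sum.inl 0) * X (Sum.inr 1) : Ring' k 3) ^ i
          * (X (Sum.inl 1) * X (Sum.inr 0)) ^ (p - 1 - i) :=
    sub_pow_prime_sub_one p hne1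
  have e2 : (fb (k := k) (1 : Fin 3) 2) ^ (p - 1)
      = ∑ j ∈ Finset.range p, (X (Sum.inl 1) * X (Sum.inr 2) : Ring' k 3) ^ j
          * (X (Sum.inl 2) * X (Sum.inr 1)) ^ (p - 1 - j) :=
    sub_pow_prime_sub_one p hne2
  have e3 : (fb (k := k) (0 : Fin 3) 2) ^ (p - 1)
      = ∑ l ∈ Finset.range p, (X (Sum.inl 0) * X (Sum.inr 2) : Ring' k 3) ^ l
          * (X (Sum.inl 2) * X (Sum.inr 0)) ^ (p - 1 - l) :=
    sub_pow_prime_sub_one p hne3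
  have hexp : (fb (k := k) (0 : Fin 3) 1 * fb (1 : Fin 3) 2 * fb (0 : Fin 3) 2) ^ (p - 1)
      = ∑ i ∈ Finset.range p, ∑ j ∈ Finset.range p, ∑ l ∈ Finset.range p,
          (X (Sum.inl 0) * X (Sum.inr 1) : Ring' k 3) ^ i
            * (X (Sum.inl 1) * X (Sum.inr 0)) ^ (p - 1 - i)
          * ((X (Sum.inl 1) * X (Sum.inr 2)) ^ j
            * (X (Sum.inl 2) * X (Sum.inr 1)) ^ (p - 1 - j))
          * ((X (Sum.inl 0) * X (Sum.inr 2)) ^ l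
            * (X (Sum.inl 2) * X (Sum.inr 0)) ^ (p - 1 - l)) := by
    rw [mul_pow, mul_pow, e1, e2, e3, triple_sum_mul]
  rw [hexp]
  refine main_split I p hp0
    (fun i j l =>
      (X (Sum.inl 0) * X (Sum.inr 1) : Ring' k 3) ^ i
        * (X (Sum.inl 1) * X (Sum.inr 0)) ^ (p - 1 - i)
      * ((X (Sum.inl 1) * X (Sum.inr 2)) ^ j
        * (X (Sum.inl 2) * X (Sum.inr 1)) ^ (p - 1 - j))
      * ((X (Sum.inl 0) * X (Sum.inr 2)) ^ l
        * (X (Sum.inl 2) * X (Sum.inr 0)) ^ (p - 1 - l)))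
    ((X (Sum.inl 0) * X (Sum.inl 1) * X (Sum.inl 2)
        * X (Sum.inr 0) * X (Sum.inr 1) * X (Sum.inr 2) : Ring' k 3) ^ (p - 1))
    ?_ ?_ ?_
  · -- p • M = 0
    rw [nsmul_eq_mul, CharP.cast_eq_zero (MvPolynomial (Fin 3 ⊕ Fin 3) k) p, zero_mul]
  · -- diagonal terms equal M
    intro i hi
    obtain ⟨m, hm⟩ : ∃ m, p - 1 = i + m := ⟨p - 1 - i, by omega⟩
    simp only [hm, Nat.add_sub_cancel_left, Nat.add_sub_cancel]
    ring
  · -- off-diagonal terms lie in I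
    intro i j l hi hj hl hnd
    have hiq : i ≤ p - 1 := by omega
    have hjq : j ≤ p - 1 := by omega
    have hlq : l ≤ p - 1 := by omega
    rcases lt_trichotomy j i with hlt | heq | hgt
    · -- j < i : use y₂ = X (inr 1), exponent i + (p-1-j) ≥ p
      refine hdvd (Sum.inr 1) _ (dvd_trans (pow_dvd_pow _ (show p ≤ i + (p - 1 - j) by omega)) ?_)
      exact ⟨(X (Sum.inl 0) : Ring' k 3) ^ i * (X (Sum.inl 1) * X (Sum.inr 0)) ^ (p - 1 - i)
        * ((X (Sum.inl 1) * X (Sum.inr 2)) ^ j * (X (Sum.inl 2)) ^ (p - 1 - j))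
        * ((X (Sum.inl 0) * X (Sum.inr 2)) ^ l * (X (Sum.inl 2) * X (Sum.inr 0)) ^ (p - 1 - l)),
        by ring⟩
    · -- j = i : split on i + l
      subst heq
      have hlne : l ≠ p - 1 - j := fun h => hnd ⟨rfl, h⟩
      rcases le_or_gt p (j + l) with h2 | h2
      · -- use x₁ = X (inl 0), exponent j + l ≥ p
        refine hdvd (Sum.inl 0) _ (dvd_trans (pow_dvd_pow _ h2) ?_)
        exact ⟨(X (Sum.inr 1) : Ring' k 3) ^ j * (X (Sum.inl 1) * X (Sum.inr 0)) ^ (p - 1 - j)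
          * ((X (Sum.inl 1) * X (Sum.inr 2)) ^ j * (X (Sum.inl 2) * X (Sum.inr 1)) ^ (p - 1 - j))
          * ((X (Sum.inr 2)) ^ l * (X (Sum.inl 2) * X (Sum.inr 0)) ^ (p - 1 - l)),
          by ring⟩
      · -- use y₁ = X (inr 0), exponent (p-1-j) + (p-1-l) ≥ p
        refine hdvd (Sum.inr 0) _
          (dvd_trans (pow_dvd_pow _ (show p ≤ (p - 1 - j) + (p - 1 - l) by omega)) ?_)
        exact ⟨(X (Sum.inl 0) * X (Sum.inr 1) : Ring' k 3) ^ j * (X (Sum.inl 1)) ^ (p - 1 - j)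
          * ((X (Sum.inl 1) * X (Sum.inr 2)) ^ j * (X (Sum.inl 2) * X (Sum.inr 1)) ^ (p - 1 - j))
          * ((X (Sum.inl 0) * X (Sum.inr 2)) ^ l * (X (Sum.inl 2)) ^ (p - 1 - l)),
          by ring⟩
    · -- j > i : use x₂ = X (inl 1), exponent (p-1-i) + j ≥ p
      refine hdvd (Sum.inl 1) _
        (dvd_trans (pow_dvd_pow _ (show p ≤ (p - 1 - i) + j by omega)) ?_)
      exact ⟨(X (Sum.inl 0) * X (Sum.inr 1) : Ring' k 3) ^ i * (X (Sum.inr 0)) ^ (p - 1 - i)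
        * ((X (Sum.inr 2)) ^ j * (X (Sum.inl 2) * X (Sum.inr 1)) ^ (p - 1 - j))
        * ((X (Sum.inl 0) * X (Sum.inr 2)) ^ l * (X (Sum.inl 2) * X (Sum.inr 0)) ^ (p - 1 - l)),
        by ring⟩


end BEI
end
end

section
/- Let p be a prime and k = ℤ/pℤ. Let G be a finite simple graph on {1,…,n}, let W ⊆ {1,…,n}, and let H be the induced subgraph of G on W. Set R_G = k[x_1,…,x_n,y_1,…,y_n]/J_G and R_H = k[{x_i, y_i : i ∈ W}]/J_H. If R_G admits an F-splitting, then R_H admits an F-splitting. -/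
open MvPolynomial

noncomputable section

namespace BEI

/-- The binomial edge ideal `J_G` of a graph `G` on a vertex type `V`, inside the
polynomial ring on variables `x_v` (`= X (Sum.inl v)`) and `y_v` (`= X (Sum.inr v)`). -/
def beIdealV {k : Type*} [CommRing k] {V : Type*} (G : SimpleGraph V) :
    Ideal (MvPolynomial (V ⊕ V) k) :=
  Ideal.span {g | ∃ i j, G.Adj i j ∧
    g = X (Sum.inl i) * X (Sum.inr j) - X (Sum.inl j) * X (Sum.inr i)}

/-- `φ` is an F-splitting of the characteristic-`p` ring `T`: `φ` is additive, satisfies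
`φ (a^p • b) = a • φ b`, and splits the Frobenius: `φ (r^p) = r`. -/
structure IsFSplitting (p : ℕ) {T : Type*} [CommRing T] (φ : T → T) : Prop where
  map_add : ∀ a b : T, φ (a + b) = φ a + φ b
  semilinear : ∀ a b : T, φ (a ^ p * b) = a * φ b
  splits : ∀ r : T, φ (r ^ p) = r

/-- over `k = ℤ/pℤ`, if the quotient by the binomial edge ideal of `G`
admits an F-splitting, then so does the quotient by the binomial edge ideal of any
induced subgraph `H = G[W]`. -/
theorem F_split_induced_subgraph (p : ℕ) (hp : p.Prime) (n : ℕ)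
    (G : SimpleGraph (Fin n)) (W : Set (Fin n))
    (h : ∃ φ : (MvPolynomial (Fin n ⊕ Fin n) (ZMod p) ⧸ beIdealV (k := ZMod p) G) →
        (MvPolynomial (Fin n ⊕ Fin n) (ZMod p) ⧸ beIdealV (k := ZMod p) G),
      IsFSplitting p φ) :
    ∃ φ : (MvPolynomial (↥W ⊕ ↥W) (ZMod p) ⧸ beIdealV (k := ZMod p) (G.induce W)) →
        (MvPolynomial (↥W ⊕ ↥W) (ZMod p) ⧸ beIdealV (k := ZMod p) (G.induce W)),
      IsFSplitting p φ := by
  classical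
  obtain ⟨φ, hφ⟩ := h
  -- inclusion of polynomial rings
  let ι₀ : MvPolynomial (↥W ⊕ ↥W) (ZMod p) →+* MvPolynomial (Fin n ⊕ Fin n) (ZMod p) :=
    (rename (Sum.map Subtype.val Subtype.val)).toRingHom
  -- projection of polynomial rings
  let g : Fin n ⊕ Fin n → MvPolynomial (↥W ⊕ ↥W) (ZMod p) := fun v =>
    match v with
    | Sum.inl i => if h : i ∈ W then X (Sum.inl ⟨i, h⟩) else 0
    | Sum.inr i => if h : i ∈ W then X (Sum.inr ⟨i, h⟩) else 0
  let π₀ : MvPolynomial (Fin n ⊕ Fin n) (ZMod p) →+* MvPolynomial (↥W ⊕ ↥W) (ZMod p) :=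
    (aeval g).toRingHom
  have hπι : ∀ a, π₀ (ι₀ a) = a := by
    intro a
    show (aeval g) (rename (Sum.map Subtype.val Subtype.val) a) = a
    rw [aeval_rename]
    have hcomp : (g ∘ Sum.map Subtype.val Subtype.val) = X := by
      funext v
      cases v with
      | inl i => simp [g, i.2]
      | inr i => simp [g, i.2]
    rw [hcomp, aeval_X_left_apply]
  have hι_ideal : ∀ a ∈ beIdealV (k := ZMod p) (G.induce W), ι₀ a ∈ beIdealV (k := ZMod p) G := by
    intro a ha
    have hmap : Ideal.map ι₀ (beIdealV (k := ZMod p) (G.induce W)) ≤ beIdealV (k := ZMod p) G := by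
      rw [beIdealV, beIdealV, Ideal.map_span]
      apply Ideal.span_le.mpr
      rintro _ ⟨gg, ⟨i, j, hij, rfl⟩, rfl⟩
      apply Ideal.subset_span
      exact ⟨i.val, j.val, hij, by simp [ι₀]⟩
    exact hmap (Ideal.mem_map_of_mem _ ha)
  have hπ_ideal : ∀ a ∈ beIdealV (k := ZMod p) G, π₀ a ∈ beIdealV (k := ZMod p) (G.induce W) := by
    intro a ha
    have hmap : Ideal.map π₀ (beIdealV (k := ZMod p) G) ≤ beIdealV (k := ZMod p) (G.induce W) := by
      rw [beIdealV, beIdealV, Ideal.map_span]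
      apply Ideal.span_le.mpr
      rintro _ ⟨gg, ⟨i, j, hij, rfl⟩, rfl⟩
      by_cases hi : i ∈ W
      · by_cases hj : j ∈ W
        · apply Ideal.subset_span
          refine ⟨⟨i, hi⟩, ⟨j, hj⟩, hij, ?_⟩
          simp [π₀, g, hi, hj]
        · have h0 : π₀ (X (Sum.inl i) * X (Sum.inr j) - X (Sum.inl j) * X (Sum.inr i)) = 0 := by
            simp [π₀, g, hj]
          rw [h0]
          exact Ideal.zero_mem _
      · have h0 : π₀ (X (Sum.inl i) * X (Sum.inr j) - X (Sum.inl j) * X (Sum.inr i)) = 0 := by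
          simp [π₀, g, hi]
        rw [h0]
        exact Ideal.zero_mem _
    exact hmap (Ideal.mem_map_of_mem _ ha)
  let mkG := Ideal.Quotient.mk (beIdealV (k := ZMod p) G)
  let mkH := Ideal.Quotient.mk (beIdealV (k := ZMod p) (G.induce W))
  let ι : (MvPolynomial (↥W ⊕ ↥W) (ZMod p) ⧸ beIdealV (k := ZMod p) (G.induce W)) →+*
      (MvPolynomial (Fin n ⊕ Fin n) (ZMod p) ⧸ beIdealV (k := ZMod p) G) :=
    Ideal.Quotient.lift _ (mkG.comp ι₀)
      (fun a ha => by
        rw [RingHom.comp_apply]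
        exact Ideal.Quotient.eq_zero_iff_mem.mpr (hι_ideal a ha))
  let π : (MvPolynomial (Fin n ⊕ Fin n) (ZMod p) ⧸ beIdealV (k := ZMod p) G) →+*
      (MvPolynomial (↥W ⊕ ↥W) (ZMod p) ⧸ beIdealV (k := ZMod p) (G.induce W)) :=
    Ideal.Quotient.lift _ (mkH.comp π₀)
      (fun a ha => by
        rw [RingHom.comp_apply]
        exact Ideal.Quotient.eq_zero_iff_mem.mpr (hπ_ideal a ha))
  have hπι' : ∀ a, π (ι a) = a := by
    intro a
    obtain ⟨a, rfl⟩ := Ideal.Quotient.mk_surjective a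
    show π (ι (mkH a)) = mkH a
    simp [ι, π, mkG, mkH, Ideal.Quotient.lift_mk, hπι a]
  refine ⟨fun x => π (φ (ι x)), ?_, ?_, ?_⟩
  · intro a b
    rw [ι.map_add, hφ.map_add, π.map_add]
  · intro a b
    rw [ι.map_mul, ι.map_pow, hφ.semilinear, π.map_mul, hπι']
  · intro r
    rw [ι.map_pow, hφ.splits, hπι']

end BEI
end
end

section
/- Let k be a field of characteristic 2. Fix distinct a, b, c ∈ {1,…,n}, a subset A ⊆ {1,…,n}∖{a,b,c}, and a subset B ⊆ {1,…,n}∖(A ∪ {b}). Let G be a finite simple graph on {1,…,n} such that: every vertex k ∈ A is adjacent to b; every vertex k ∈ A is adjacent to a or to c; and every edge of G has at least one endpoint in A. Then P(A,B)^{[2]} : J_G = P(A,B)^{[2]} + (ω_A). -/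
open MvPolynomial

noncomputable section

namespace BEI

variable {k : Type*} [CommRing k] {n : ℕ}

/-- The binomial edge ideal `J_G` of a graph `G` on `{1,…,n}`. -/
def beIdeal (G : SimpleGraph (Fin n)) : Ideal (Ring' k n) :=
  Ideal.span {g | ∃ i j, G.Adj i j ∧ g = fb i j}

/-- The ideal `P(A,B)`, generated by `{x_i, y_i : i ∈ A}` together with all `f_{a,b}` for
distinct `a, b ∈ B`. -/
def PAB (A B : Finset (Fin n)) : Ideal (Ring' k n) :=
  Ideal.span
    ({g | ∃ i ∈ A, g = xv i ∨ g = yv i} ∪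
      {g | ∃ a ∈ B, ∃ b ∈ B, a ≠ b ∧ g = fb a b})

/-- The monomial `ω_A = ∏_{i ∈ A} x_i y_i`. -/
def omegaA (A : Finset (Fin n)) : Ring' k n := ∏ i ∈ A, (xv i * yv i)

-- chunk 1 : basic defs
abbrev M (n : ℕ) := (Fin n ⊕ Fin n) →₀ ℕ

def ex (i : Fin n) : M n := Finsupp.single (Sum.inl i) 1
def ey (i : Fin n) : M n := Finsupp.single (Sum.inr i) 1

def idx : Fin n ⊕ Fin n → Fin n := Sum.elim id id

/-- the invariant-based equivalence on monomials -/
def eqv (B : Finset (Fin n)) (m m' : M n) : Prop :=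
  (∀ v, idx v ∉ B → m v = m' v) ∧
  (∀ u ∈ B, m (.inl u) + m (.inr u) = m' (.inl u) + m' (.inr u)) ∧
  (∀ u ∈ B, m (.inl u) % 2 = m' (.inl u) % 2) ∧
  (∑ u ∈ B, m (.inl u)) = ∑ u ∈ B, m' (.inl u)

def Ared (A : Finset (Fin n)) (m : M n) : Prop :=
  ∀ i ∈ A, m (.inl i) ≤ 1 ∧ m (.inr i) ≤ 1

open Classical in
/-- sum of the coefficients of `g` over the `eqv`-class of `m` -/
def clsum (B : Finset (Fin n)) (g : Ring' k n) (m : M n) : k :=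
  ∑ m' ∈ g.support, if eqv B m' m then coeff m' g else 0

def crit (A B : Finset (Fin n)) (g : Ring' k n) : Prop :=
  ∀ m : M n, Ared A m → clsum B g m = 0

lemma eqv_refl (B : Finset (Fin n)) (m : M n) : eqv B m m := by
  refine ⟨fun _ _ => rfl, fun _ _ => rfl, fun _ _ => rfl, rfl⟩

lemma eqv_symm {B : Finset (Fin n)} {m m' : M n} (h : eqv B m m') : eqv B m' m := by
  obtain ⟨h1, h2, h3, h4⟩ := h
  exact ⟨fun v hv => (h1 v hv).symm, fun u hu => (h2 u hu).symm,
    fun u hu => (h3 u hu).symm, h4.symm⟩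

lemma eqv_trans {B : Finset (Fin n)} {m₁ m₂ m₃ : M n} (h : eqv B m₁ m₂) (h' : eqv B m₂ m₃) :
    eqv B m₁ m₃ := by
  obtain ⟨h1, h2, h3, h4⟩ := h
  obtain ⟨g1, g2, g3, g4⟩ := h'
  exact ⟨fun v hv => (h1 v hv).trans (g1 v hv), fun u hu => (h2 u hu).trans (g2 u hu),
    fun u hu => (h3 u hu).trans (g3 u hu), h4.trans g4⟩

lemma eqv_add_iff {B : Finset (Fin n)} {m m' w : M n} :
    eqv B (m + w) (m' + w) ↔ eqv B m m' := by
  simp only [eqv, Finsupp.add_apply, Finset.sum_add_distrib]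
  constructor
  · rintro ⟨h1, h2, h3, h4⟩
    refine ⟨fun v hv => by have := h1 v hv; omega,
      fun u hu => by have := h2 u hu; omega,
      fun u hu => by have := h3 u hu; omega, by omega⟩
  · rintro ⟨h1, h2, h3, h4⟩
    refine ⟨fun v hv => by have := h1 v hv; omega,
      fun u hu => by have := h2 u hu; omega,
      fun u hu => by have := h3 u hu; omega, by omega⟩

lemma eqv_coord {B : Finset (Fin n)} {m m' : M n} (h : eqv B m m') {v : Fin n ⊕ Fin n}
    (hv : idx v ∉ B) : m v = m' v := h.1 v hv

-- chunk 2 : clsum basic lemmas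
open Classical in
lemma clsum_eq_sum_subset {B : Finset (Fin n)} {g : Ring' k n} {m : M n} {S : Finset (M n)}
    (hS : g.support ⊆ S) :
    clsum B g m = ∑ m' ∈ S, if eqv B m' m then coeff m' g else 0 := by
  classical
  rw [clsum]
  refine Finset.sum_subset hS ?_
  intro x _ hx
  rw [notMem_support_iff.mp hx]
  simp

lemma clsum_zero (B : Finset (Fin n)) (m : M n) : clsum B (0 : Ring' k n) m = 0 := by
  simp [clsum]

lemma clsum_add (B : Finset (Fin n)) (g h : Ring' k n) (m : M n) :
    clsum B (g + h) m = clsum B g m + clsum B h m := by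
  classical
  have hg : g.support ⊆ g.support ∪ h.support ∪ (g + h).support := by
    intro x hx; simp [hx]
  have hh : h.support ⊆ g.support ∪ h.support ∪ (g + h).support := by
    intro x hx; simp [hx]
  have hgh : (g + h).support ⊆ g.support ∪ h.support ∪ (g + h).support := by
    intro x hx; simp [hx]
  rw [clsum_eq_sum_subset hg, clsum_eq_sum_subset hh, clsum_eq_sum_subset hgh,
    ← Finset.sum_add_distrib]
  refine Finset.sum_congr rfl fun x _ => ?_
  by_cases hx : eqv B x m <;> simp [hx, coeff_add]

lemma clsum_neg (B : Finset (Fin n)) (g : Ring' k n) (m : M n) :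
    clsum B (-g) m = - clsum B g m := by
  classical
  rw [clsum, clsum]
  rw [show (-g : Ring' k n).support = g.support by
    simpa using MvPolynomial.support_neg (p := g)]
  rw [← Finset.sum_neg_distrib]
  refine Finset.sum_congr rfl fun x _ => ?_
  by_cases hx : eqv B x m <;> simp [hx]

lemma clsum_sub (B : Finset (Fin n)) (g h : Ring' k n) (m : M n) :
    clsum B (g - h) m = clsum B g m - clsum B h m := by
  rw [sub_eq_add_neg, clsum_add, clsum_neg, sub_eq_add_neg]

open Classical in
lemma clsum_monomial (B : Finset (Fin n)) (w m : M n) (c : k) :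
    clsum B (monomial w c) m = if eqv B w m then c else 0 := by
  classical
  have hs : (monomial w c : Ring' k n).support ⊆ {w} := support_monomial_subset
  rw [clsum_eq_sum_subset hs, Finset.sum_singleton, coeff_monomial]
  simp

open Classical in
lemma clsum_monomial_mul (B : Finset (Fin n)) (w : M n) (c : k) (g : Ring' k n) (m : M n) :
    clsum B (monomial w c * g) m
      = ∑ μ ∈ g.support, if eqv B (μ + w) m then c * coeff μ g else 0 := by
  classical
  have hs : (monomial w c * g).support ⊆ g.support.image (· + w) := by
    intro x hx
    rw [mem_support_iff, coeff_monomial_mul'] at hx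
    by_cases hle : w ≤ x
    · rw [if_pos hle] at hx
      refine Finset.mem_image.mpr ⟨x - w, ?_, ?_⟩
      · rw [mem_support_iff]; intro h0; rw [h0, mul_zero] at hx; exact hx rfl
      · rw [tsub_add_cancel_of_le hle]
    · rw [if_neg hle] at hx; exact absurd rfl hx
  rw [clsum_eq_sum_subset hs, Finset.sum_image (by intro a _ b _ h; exact add_right_cancel h)]
  refine Finset.sum_congr rfl fun μ hμ => ?_
  have : coeff (μ + w) (monomial w c * g) = c * coeff μ g := by
    rw [add_comm]; exact coeff_monomial_mul _ _ _ _
  rw [this]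

-- chunk 3 : crit lemmas
@[simp] lemma idx_inl (i : Fin n) : idx (Sum.inl i : Fin n ⊕ Fin n) = i := rfl
@[simp] lemma idx_inr (i : Fin n) : idx (Sum.inr i : Fin n ⊕ Fin n) = i := rfl

variable {A B : Finset (Fin n)}

lemma crit_zero : crit A B (0 : Ring' k n) := fun m _ => clsum_zero B m

lemma crit_add {g h : Ring' k n} (hg : crit A B g) (hh : crit A B h) : crit A B (g + h) := by
  intro m hm; rw [clsum_add, hg m hm, hh m hm, add_zero]

lemma crit_neg {g : Ring' k n} (hg : crit A B g) : crit A B (-g) := by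
  intro m hm; rw [clsum_neg, hg m hm, neg_zero]

lemma crit_sub {g h : Ring' k n} (hg : crit A B g) (hh : crit A B h) : crit A B (g - h) := by
  intro m hm; rw [clsum_sub, hg m hm, hh m hm, sub_zero]

lemma Ared_of_eqv_add {m μ₀ w : M n} (hAB : ∀ i ∈ A, i ∉ B) (hm : Ared A m)
    (hμ₀ : eqv B (μ₀ + w) m) : Ared A μ₀ := by
  intro i hi
  have hx := eqv_coord hμ₀ (v := Sum.inl i) (by simpa using hAB i hi)
  have hy := eqv_coord hμ₀ (v := Sum.inr i) (by simpa using hAB i hi)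
  simp only [Finsupp.add_apply] at hx hy
  have := hm i hi
  omega

lemma crit_monomial_mul (hAB : ∀ i ∈ A, i ∉ B) {g : Ring' k n} (h : crit A B g)
    (w : M n) (c : k) : crit A B (monomial w c * g) := by
  classical
  intro m hm
  rw [clsum_monomial_mul]
  by_cases H : ∃ μ₀ ∈ g.support, eqv B (μ₀ + w) m
  · obtain ⟨μ₀, hμ₀s, hμ₀⟩ := H
    have key : ∀ μ : M n, eqv B (μ + w) m ↔ eqv B μ μ₀ := by
      intro μ
      constructor
      · intro he
        exact eqv_add_iff.mp (eqv_trans he (eqv_symm hμ₀))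
      · intro he
        exact eqv_trans (eqv_add_iff.mpr he) hμ₀
    have : (∑ μ ∈ g.support, if eqv B (μ + w) m then c * coeff μ g else 0)
        = c * clsum B g μ₀ := by
      rw [clsum, Finset.mul_sum]
      refine Finset.sum_congr rfl fun μ _ => ?_
      rw [key μ]
      by_cases hh : eqv B μ μ₀ <;> simp [hh]
    rw [this, h μ₀ (Ared_of_eqv_add hAB hm hμ₀), mul_zero]
  · refine Finset.sum_eq_zero fun μ hμ => ?_
    exact if_neg fun he => H ⟨μ, hμ, he⟩

lemma crit_mul (hAB : ∀ i ∈ A, i ∉ B) {g : Ring' k n} (h : crit A B g)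
    (p : Ring' k n) : crit A B (p * g) := by
  induction p using MvPolynomial.induction_on' with
  | monomial u a => exact crit_monomial_mul hAB h u a
  | add p q hp hq => rw [add_mul]; exact crit_add hp hq

lemma crit_shift_cancel {w : M n} (hw : ∀ i ∈ A, w (Sum.inl i) = 0 ∧ w (Sum.inr i) = 0)
    {g : Ring' k n} (h : crit A B (monomial w (1 : k) * g)) : crit A B g := by
  classical
  intro m hm
  have hm' : Ared A (m + w) := by
    intro i hi
    have := hm i hi
    have := hw i hi
    simp only [Finsupp.add_apply]
    omega
  have := h (m + w) hm'
  rw [clsum_monomial_mul] at this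
  simp only [eqv_add_iff, one_mul] at this
  rw [clsum]
  exact this

open Classical in
def proj (P : M n → Prop) (g : Ring' k n) : Ring' k n :=
  ∑ m ∈ g.support.filter P, monomial m (coeff m g)

open Classical in
lemma coeff_proj (P : M n → Prop) (g : Ring' k n) (m : M n) :
    coeff m (proj P g) = if P m then coeff m g else 0 := by
  classical
  rw [proj, coeff_sum]
  have : ∀ m' ∈ g.support.filter P, coeff m (monomial m' (coeff m' g))
      = if m' = m then coeff m' g else 0 := fun m' _ => coeff_monomial _ _ _
  rw [Finset.sum_congr rfl this, Finset.sum_ite_eq' (g.support.filter P) m (fun m' => coeff m' g)]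
  by_cases hP : P m
  · by_cases hs : m ∈ g.support
    · simp [hP, hs, Finset.mem_filter]
    · simp [hP, hs, Finset.mem_filter, notMem_support_iff.mp hs]
  · simp [hP, Finset.mem_filter]

lemma support_proj {P : M n → Prop} {g : Ring' k n} {m : M n}
    (hm : m ∈ (proj P g).support) : P m ∧ m ∈ g.support := by
  rw [mem_support_iff, coeff_proj] at hm
  by_cases hP : P m
  · rw [if_pos hP] at hm
    exact ⟨hP, mem_support_iff.mpr hm⟩
  · rw [if_neg hP] at hm
    exact absurd rfl hm

lemma crit_proj {P : M n → Prop} (hP : ∀ m m' : M n, eqv B m' m → (P m' ↔ P m))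
    {g : Ring' k n} (h : crit A B g) : crit A B (proj P g) := by
  classical
  intro m hm
  have hs : (proj P g).support ⊆ g.support := fun x hx => (support_proj hx).2
  rw [clsum_eq_sum_subset hs]
  by_cases hPm : P m
  · have heq : (∑ m' ∈ g.support, if eqv B m' m then coeff m' (proj P g) else 0)
        = clsum B g m := by
      rw [clsum]
      refine Finset.sum_congr rfl fun m' _ => ?_
      by_cases he : eqv B m' m
      · rw [if_pos he, if_pos he, coeff_proj, if_pos ((hP m m' he).mpr hPm)]
      · rw [if_neg he, if_neg he]
    rw [heq, h m hm]
  · refine Finset.sum_eq_zero fun m' _ => ?_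
    by_cases he : eqv B m' m
    · rw [if_pos he, coeff_proj, if_neg fun hPm' => hPm ((hP m m' he).mp hPm')]
    · rw [if_neg he]

lemma crit_mono {A' : Finset (Fin n)} (hsub : A' ⊆ A) {g : Ring' k n}
    (h : crit A' B g) : crit A B g := by
  intro m hm
  exact h m fun i hi => hm i (hsub hi)

lemma crit_EX {i₀ : Fin n} {A' : Finset (Fin n)} (hi₀B : i₀ ∉ B)
    {g : Ring' k n} (hsupp : ∀ m ∈ g.support, m (Sum.inl i₀) ≤ 1 ∧ m (Sum.inr i₀) ≤ 1)
    (h : crit (insert i₀ A') B g) : crit A' B g := by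
  classical
  intro m hm
  by_cases hred : m (Sum.inl i₀) ≤ 1 ∧ m (Sum.inr i₀) ≤ 1
  · refine h m ?_
    intro i hi
    rcases Finset.mem_insert.mp hi with rfl | hi'
    · exact hred
    · exact hm i hi'
  · rw [clsum]
    refine Finset.sum_eq_zero fun m' hm' => ?_
    refine if_neg fun he => ?_
    have hx := eqv_coord he (v := Sum.inl i₀) (by simpa using hi₀B)
    have hy := eqv_coord he (v := Sum.inr i₀) (by simpa using hi₀B)
    have := hsupp m' hm'
    omega

-- chunk 4 : monomial identities and proj computation lemmas
lemma X_eq_monomial (v : Fin n ⊕ Fin n) :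
    (X v : Ring' k n) = monomial (Finsupp.single v 1) 1 := rfl

lemma X_mul_X (v w : Fin n ⊕ Fin n) :
    (X v * X w : Ring' k n) = monomial (Finsupp.single v 1 + Finsupp.single w 1) 1 := by
  rw [X_eq_monomial, X_eq_monomial, monomial_mul, one_mul]

lemma xv_mul_yv (i j : Fin n) : (xv i * yv j : Ring' k n) = monomial (ex i + ey j) 1 :=
  X_mul_X _ _

lemma fb_eq (i j : Fin n) :
    (fb i j : Ring' k n) = monomial (ex i + ey j) 1 - monomial (ex j + ey i) 1 := by
  rw [fb, xv_mul_yv, xv_mul_yv]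

lemma two_zero [CharP k 2] : (2 : Ring' k n) = 0 := by
  exact_mod_cast CharP.cast_eq_zero (Ring' k n) 2

lemma fb_sq [CharP k 2] (i j : Fin n) :
    (fb i j : Ring' k n) ^ 2
      = monomial ((ex i + ey j) + (ex i + ey j)) 1
        - monomial ((ex j + ey i) + (ex j + ey i)) 1 := by
  have h2 : (2 : Ring' k n) = 0 := two_zero
  have hp : (monomial (ex i + ey j) (1 : k)) ^ 2
      = monomial ((ex i + ey j) + (ex i + ey j)) (1 : k) := by
    rw [sq, monomial_mul, one_mul]
  have hq : (monomial (ex j + ey i) (1 : k)) ^ 2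
      = monomial ((ex j + ey i) + (ex j + ey i)) (1 : k) := by
    rw [sq, monomial_mul, one_mul]
  rw [fb_eq, ← hp, ← hq]
  set p := monomial (ex i + ey j) (1 : k)
  set q := monomial (ex j + ey i) (1 : k)
  linear_combination (q ^ 2 - p * q) * h2

lemma support_monomial_mul' {w : M n} {c : k} {g : Ring' k n} {m : M n}
    (hm : m ∈ (monomial w c * g).support) : ∃ μ ∈ g.support, m = w + μ := by
  rw [mem_support_iff, coeff_monomial_mul'] at hm
  by_cases hle : w ≤ m
  · rw [if_pos hle] at hm
    refine ⟨m - w, ?_, ?_⟩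
    · rw [mem_support_iff]; intro h0; rw [h0, mul_zero] at hm; exact hm rfl
    · rw [add_comm, tsub_add_cancel_of_le hle]
  · rw [if_neg hle] at hm; exact absurd rfl hm

lemma proj_sub (P : M n → Prop) (g h : Ring' k n) :
    proj P (g - h) = proj P g - proj P h := by
  apply MvPolynomial.ext
  intro m
  classical
  simp only [coeff_proj, coeff_sub]
  split_ifs <;> simp

lemma proj_eq_zero {P : M n → Prop} {g : Ring' k n} (h : ∀ m ∈ g.support, ¬ P m) :
    proj P g = 0 := by
  apply MvPolynomial.ext
  intro m
  classical
  rw [coeff_proj, coeff_zero]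
  by_cases hP : P m
  · rw [if_pos hP]
    by_cases hs : m ∈ g.support
    · exact absurd hP (h m hs)
    · exact notMem_support_iff.mp hs
  · rw [if_neg hP]

lemma proj_coord_mul {v₀ : Fin n ⊕ Fin n} {d : ℕ} {w : M n} (c : k) (g : Ring' k n)
    (hwd : w v₀ ≤ d) :
    proj (fun m => m v₀ = d) (monomial w c * g)
      = monomial w c * proj (fun m => m v₀ = d - w v₀) g := by
  classical
  apply MvPolynomial.ext
  intro m
  by_cases hle : w ≤ m
  · have hv : w v₀ ≤ m v₀ := hle v₀
    simp only [coeff_proj, coeff_monomial_mul', if_pos hle, Finsupp.tsub_apply]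
    by_cases hd : m v₀ = d
    · rw [if_pos hd]; congr 1; exact (if_pos (by omega)).symm
    · rw [if_neg hd]; exact (mul_eq_zero_of_right c (if_neg (by omega))).symm
  · simp only [coeff_proj, coeff_monomial_mul', if_neg hle, ite_self]

lemma proj_coord_mul_zero {v₀ : Fin n ⊕ Fin n} {d : ℕ} {w : M n} (c : k) (g : Ring' k n)
    (hwd : d < w v₀) :
    proj (fun m => m v₀ = d) (monomial w c * g) = 0 := by
  classical
  apply MvPolynomial.ext
  intro m
  rw [coeff_proj, coeff_zero]
  by_cases hd : m v₀ = d
  · rw [if_pos hd, coeff_monomial_mul', if_neg]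
    intro hle
    have hv : w v₀ ≤ m v₀ := hle v₀
    omega
  · rw [if_neg hd]

-- chunk 5 : cancellation of fb b e  (N2)
lemma proj_eq_self {P : M n → Prop} {g : Ring' k n} (h : ∀ m ∈ g.support, P m) :
    proj P g = g := by
  apply MvPolynomial.ext
  intro m
  classical
  rw [coeff_proj]
  by_cases hs : m ∈ g.support
  · rw [if_pos (h m hs)]
  · rw [notMem_support_iff.mp hs, ite_self]

lemma eqv_coord_invariant {B : Finset (Fin n)} {b : Fin n} (hbB : b ∉ B) (d : ℕ) :
    ∀ m m' : M n, eqv B m' m → (m' (Sum.inl b) = d ↔ m (Sum.inl b) = d) := by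
  intro m m' he
  rw [eqv_coord he (by simpa using hbB)]

section fbe
variable {A B : Finset (Fin n)} {b e : Fin n}

lemma exey_coord_1 (hbe : b ≠ e) : (ex b + ey e : M n) (Sum.inl b) = 1 := by
  simp [ex, ey, Finsupp.single_apply]

lemma exey_coord_0 (hbe : b ≠ e) : (ex e + ey b : M n) (Sum.inl b) = 0 := by
  simp [ex, ey, Finsupp.single_apply, Finsupp.single_eq_of_ne, (Ne.symm hbe)]

lemma fbe_key (hbe : b ≠ e) (N : ℕ) (g : Ring' k n)
    (hbound : ∀ m ∈ g.support, m (Sum.inl b) ≤ N) :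
    proj (fun m => m (Sum.inl b) = N + 1) (fb b e * g)
      = monomial (ex b + ey e) (1 : k) * proj (fun m => m (Sum.inl b) = N) g := by
  rw [fb_eq, sub_mul, proj_sub]
  have h1 : proj (fun m => m (Sum.inl b) = N + 1) (monomial (ex b + ey e) (1 : k) * g)
      = monomial (ex b + ey e) (1 : k)
        * proj (fun m => m (Sum.inl b) = N + 1 - (ex b + ey e) (Sum.inl b)) g :=
    proj_coord_mul _ _ (by rw [exey_coord_1 hbe]; omega)
  rw [exey_coord_1 hbe] at h1
  simp only [Nat.add_sub_cancel] at h1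
  have h2 : proj (fun m => m (Sum.inl b) = N + 1) (monomial (ex e + ey b) (1 : k) * g)
      = monomial (ex e + ey b) (1 : k)
        * proj (fun m => m (Sum.inl b) = N + 1 - (ex e + ey b) (Sum.inl b)) g :=
    proj_coord_mul _ _ (by rw [exey_coord_0 hbe]; omega)
  rw [exey_coord_0 hbe] at h2
  simp only [Nat.sub_zero] at h2
  have h3 : proj (fun m => m (Sum.inl b) = N + 1) g = 0 :=
    proj_eq_zero (fun m hm => by have := hbound m hm; omega)
  rw [h1, h2, h3, mul_zero, sub_zero]

lemma shiftw_ok (hbA : b ∉ A) (heA : e ∉ A) :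
    ∀ i ∈ A, (ex b + ey e : M n) (Sum.inl i) = 0 ∧ (ex b + ey e : M n) (Sum.inr i) = 0 := by
  intro i hi
  constructor
  · simp [ex, ey, Finsupp.single_apply]
    intro h; exact absurd (h ▸ hi) hbA
  · simp [ex, ey, Finsupp.single_apply]
    intro h; exact absurd (h ▸ hi) heA

lemma crit_fbe_cancel (hAB : ∀ i ∈ A, i ∉ B) (hbA : b ∉ A) (hbB : b ∉ B) (heA : e ∉ A)
    (hbe : b ≠ e) :
    ∀ (N : ℕ) (g : Ring' k n), (∀ m ∈ g.support, m (Sum.inl b) ≤ N) →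
      crit A B (fb b e * g) → crit A B g := by
  intro N
  induction N with
  | zero =>
    intro g hbound hcrit
    have hself : proj (fun m => m (Sum.inl b) = 0) g = g :=
      proj_eq_self (fun m hm => by have := hbound m hm; omega)
    have hkey := fbe_key (k := k) hbe 0 g hbound
    rw [hself] at hkey
    have h1 : crit A B (proj (fun m => m (Sum.inl b) = 0 + 1) (fb b e * g)) :=
      crit_proj (eqv_coord_invariant hbB _) hcrit
    rw [hkey] at h1
    exact crit_shift_cancel (shiftw_ok hbA heA) h1
  | succ N ih =>
    intro g hbound hcrit
    set gT := proj (fun m => m (Sum.inl b) = N + 1) g with hgT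
    have hkey := fbe_key (k := k) hbe (N + 1) g hbound
    have h1 : crit A B (proj (fun m => m (Sum.inl b) = N + 1 + 1) (fb b e * g)) :=
      crit_proj (eqv_coord_invariant hbB _) hcrit
    rw [hkey] at h1
    have hT : crit A B gT := crit_shift_cancel (shiftw_ok hbA heA) h1
    have hgL : crit A B (fb b e * (g - gT)) := by
      have : fb b e * (g - gT) = fb b e * g - fb b e * gT := by ring
      rw [this]
      exact crit_sub hcrit (crit_mul hAB hT (fb b e))
    have hboundL : ∀ m ∈ (g - gT).support, m (Sum.inl b) ≤ N := by
      intro m hm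
      rw [mem_support_iff, coeff_sub, hgT, coeff_proj] at hm
      by_cases hd : m (Sum.inl b) = N + 1
      · rw [if_pos hd, sub_self] at hm; exact absurd rfl hm
      · by_cases hs : m ∈ g.support
        · have := hbound m hs; omega
        · rw [notMem_support_iff.mp hs] at hm; simp at hm
    have hL : crit A B (g - gT) := ih (g - gT) hboundL hgL
    have : g = gT + (g - gT) := by ring
    rw [this]
    exact crit_add hT hL

end fbe

-- chunk 6 : generator sets and connectivity
def Sgen (A B : Finset (Fin n)) : Set (Ring' k n) :=
  {g | ∃ i ∈ A, g = xv i ∨ g = yv i} ∪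
    {g | ∃ a ∈ B, ∃ b ∈ B, a ≠ b ∧ g = fb a b}

def Qset (A B : Finset (Fin n)) : Set (Ring' k n) := (· ^ 2) '' (Sgen A B)

lemma xv_sq_mem {A B : Finset (Fin n)} {i : Fin n} (hi : i ∈ A) :
    (xv i : Ring' k n) ^ 2 ∈ Qset A B :=
  ⟨xv i, Or.inl ⟨i, hi, Or.inl rfl⟩, rfl⟩

lemma yv_sq_mem {A B : Finset (Fin n)} {i : Fin n} (hi : i ∈ A) :
    (yv i : Ring' k n) ^ 2 ∈ Qset A B :=
  ⟨yv i, Or.inl ⟨i, hi, Or.inr rfl⟩, rfl⟩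

lemma fb_sq_mem {A B : Finset (Fin n)} {u v : Fin n} (hu : u ∈ B) (hv : v ∈ B) (huv : u ≠ v) :
    (fb u v : Ring' k n) ^ 2 ∈ Qset A B :=
  ⟨fb u v, Or.inr ⟨u, hu, v, hv, huv, rfl⟩, rfl⟩

lemma exey2_apply (u v : Fin n) (w : Fin n ⊕ Fin n) :
    ((ex u + ey v) + (ex u + ey v) : M n) w
      = (if Sum.inl u = w then 2 else 0) + (if Sum.inr v = w then 2 else 0) := by
  simp only [Finsupp.add_apply, ex, ey, Finsupp.single_apply]
  split_ifs <;> omega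

lemma eqv_span {A B : Finset (Fin n)} [CharP k 2] :
    ∀ (Δ : ℕ) (m m' : M n),
      (∑ u ∈ B, ((m (Sum.inl u) : ℤ) - (m' (Sum.inl u) : ℤ)).natAbs) = Δ →
      eqv B m m' →
      (monomial m (1 : k) - monomial m' 1) ∈ Ideal.span (Qset A B) := by
  intro Δ
  induction Δ using Nat.strong_induction_on with
  | _ Δ ih =>
    intro m m' hΔ he
    by_cases hall : ∀ u ∈ B, m (Sum.inl u) = m' (Sum.inl u)
    · have hmm : m = m' := by
        ext w
        cases w with
        | inl j =>
          by_cases hj : j ∈ B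
          · exact hall j hj
          · exact he.1 _ (by simpa using hj)
        | inr j =>
          by_cases hj : j ∈ B
          · have h2 := he.2.1 j hj
            have := hall j hj
            omega
          · exact he.1 _ (by simpa using hj)
      rw [hmm, sub_self]
      exact zero_mem _
    · push_neg at hall
      obtain ⟨u₀, hu₀B, hu₀⟩ := hall
      have hsum := he.2.2.2
      have hex_gt : ∃ u ∈ B, m' (Sum.inl u) < m (Sum.inl u) := by
        by_contra hc
        push_neg at hc
        rcases lt_or_gt_of_ne hu₀ with h | h
        · have := Finset.sum_lt_sum hc ⟨u₀, hu₀B, h⟩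
          omega
        · exact absurd (hc u₀ hu₀B) (by omega)
      have hex_lt : ∃ v ∈ B, m (Sum.inl v) < m' (Sum.inl v) := by
        by_contra hc
        push_neg at hc
        obtain ⟨u, huB, hu⟩ := hex_gt
        have := Finset.sum_lt_sum hc ⟨u, huB, hu⟩
        omega
      obtain ⟨u, huB, hugt⟩ := hex_gt
      obtain ⟨v, hvB, hvlt⟩ := hex_lt
      have huv : u ≠ v := by rintro rfl; omega
      have hvB' : v ∈ B.erase u := Finset.mem_erase.mpr ⟨Ne.symm huv, hvB⟩
      have hpu := he.2.2.1 u huB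
      have hpv := he.2.2.1 v hvB
      have hdu := he.2.1 u huB
      have hdv := he.2.1 v hvB
      have hmu2 : m' (Sum.inl u) + 2 ≤ m (Sum.inl u) := by omega
      have hmv2 : m (Sum.inl v) + 2 ≤ m' (Sum.inl v) := by omega
      have hyv2 : 2 ≤ m (Sum.inr v) := by omega
      set S1 : M n := (ex u + ey v) + (ex u + ey v) with hS1
      set S2 : M n := (ex v + ey u) + (ex v + ey u) with hS2
      have hS1app := fun w => exey2_apply (n := n) u v w
      have hS2app := fun w => exey2_apply (n := n) v u w
      have e1 : S1 (Sum.inl u) = 2 := by rw [hS1, hS1app]; simp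
      have e2 : S1 (Sum.inl v) = 0 := by rw [hS1, hS1app]; simp [huv]
      have e3 : S1 (Sum.inr u) = 0 := by
        rw [hS1, hS1app]; simp [Ne.symm huv]
      have e4 : S1 (Sum.inr v) = 2 := by rw [hS1, hS1app]; simp
      have f1 : S2 (Sum.inl u) = 0 := by
        rw [hS2, hS2app]; simp [Ne.symm huv]
      have f2 : S2 (Sum.inl v) = 2 := by rw [hS2, hS2app]; simp
      have f3 : S2 (Sum.inr u) = 2 := by rw [hS2, hS2app]; simp
      have f4 : S2 (Sum.inr v) = 0 := by rw [hS2, hS2app]; simp [huv]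
      have hS1other : ∀ w, w ≠ Sum.inl u → w ≠ Sum.inr v → S1 w = 0 := by
        intro w h1 h2
        rw [hS1, hS1app, if_neg (fun h => h1 h.symm), if_neg (fun h => h2 h.symm)]
      have hS2other : ∀ w, w ≠ Sum.inl v → w ≠ Sum.inr u → S2 w = 0 := by
        intro w h1 h2
        rw [hS2, hS2app, if_neg (fun h => h1 h.symm), if_neg (fun h => h2 h.symm)]
      have hS1le : S1 ≤ m := by
        rw [Finsupp.le_def]
        intro w
        by_cases h1 : w = Sum.inl u
        · subst h1; omega
        · by_cases h2 : w = Sum.inr v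
          · subst h2; omega
          · rw [hS1other w h1 h2]; exact Nat.zero_le _
      set m₂ : M n := m - S1 + S2 with hm₂def
      have hm₂app : ∀ w, m₂ w = m w - S1 w + S2 w := by
        intro w
        rw [hm₂def, Finsupp.add_apply, Finsupp.tsub_apply]
      have hm2u : m₂ (Sum.inl u) = m (Sum.inl u) - 2 := by rw [hm₂app]; omega
      have hm2ur : m₂ (Sum.inr u) = m (Sum.inr u) + 2 := by rw [hm₂app]; omega
      have hm2v : m₂ (Sum.inl v) = m (Sum.inl v) + 2 := by rw [hm₂app]; omega
      have hm2vr : m₂ (Sum.inr v) = m (Sum.inr v) - 2 := by rw [hm₂app]; omega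
      have hm2other : ∀ t : Fin n, t ≠ u → t ≠ v →
          m₂ (Sum.inl t) = m (Sum.inl t) ∧ m₂ (Sum.inr t) = m (Sum.inr t) := by
        intro t htu htv
        constructor
        · rw [hm₂app, hS1other _ (by simp [htu]) (by simp),
            hS2other _ (by simp [htv]) (by simp)]
          omega
        · rw [hm₂app, hS1other _ (by simp) (by simp [htv]),
            hS2other _ (by simp) (by simp [htu])]
          omega
      have hdecomp : ∀ (f : Fin n → ℕ),
          ∑ t ∈ B, f t = f u + (f v + ∑ t ∈ (B.erase u).erase v, f t) := by
        intro f
        rw [← Finset.add_sum_erase _ _ huB, ← Finset.add_sum_erase _ _ hvB']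
      have hrest : ∀ t ∈ (B.erase u).erase v,
          m₂ (Sum.inl t) = m (Sum.inl t) ∧ m₂ (Sum.inr t) = m (Sum.inr t) := by
        intro t ht
        have h1 := Finset.mem_erase.mp ht
        have h2 := Finset.mem_erase.mp h1.2
        exact hm2other t h2.1 h1.1
      -- the one-step membership
      have hfb2 : (fb u v : Ring' k n) ^ 2 = monomial S1 1 - monomial S2 1 := fb_sq u v
      have hstep : monomial m (1 : k) - monomial m₂ 1 = monomial (m - S1) 1 * (fb u v) ^ 2 := by
        rw [hfb2, mul_sub, monomial_mul, monomial_mul, one_mul,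
          tsub_add_cancel_of_le hS1le, hm₂def]
      have hmem1 : monomial m (1 : k) - monomial m₂ 1 ∈ Ideal.span (Qset A B) := by
        rw [hstep]
        exact Ideal.mul_mem_left _ _ (Ideal.subset_span (fb_sq_mem huB hvB huv))
      -- m₂ is equivalent to m'
      have hm2eqv : eqv B m₂ m' := by
        refine ⟨?_, ?_, ?_, ?_⟩
        · intro w hw
          have h1 : w ≠ Sum.inl u := by rintro rfl; exact hw (by simpa using huB)
          have h2 : w ≠ Sum.inr v := by rintro rfl; exact hw (by simpa using hvB)
          have h3 : w ≠ Sum.inl v := by rintro rfl; exact hw (by simpa using hvB)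
          have h4 : w ≠ Sum.inr u := by rintro rfl; exact hw (by simpa using huB)
          have := hm₂app w
          rw [hS1other w h1 h2, hS2other w h3 h4] at this
          rw [this, ← he.1 w hw]
          omega
        · intro t htB
          by_cases htu : t = u
          · subst htu; omega
          · by_cases htv : t = v
            · subst htv; omega
            · have := hm2other t htu htv
              have := he.2.1 t htB
              omega
        · intro t htB
          by_cases htu : t = u
          · subst htu; omega
          · by_cases htv : t = v
            · subst htv; omega
            · have := hm2other t htu htv
              have := he.2.2.1 t htB
              omega
        · have h4 := he.2.2.2
          rw [hdecomp (fun t => m₂ (Sum.inl t)), hdecomp (fun t => m' (Sum.inl t))]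
          rw [hdecomp (fun t => m (Sum.inl t)), hdecomp (fun t => m' (Sum.inl t))] at h4
          have hcongr : ∑ t ∈ (B.erase u).erase v, m₂ (Sum.inl t)
              = ∑ t ∈ (B.erase u).erase v, m (Sum.inl t) :=
            Finset.sum_congr rfl fun t ht => (hrest t ht).1
          rw [hcongr]
          omega
      -- the measure decreases
      have hΔ₂ : (∑ t ∈ B, ((m₂ (Sum.inl t) : ℤ) - (m' (Sum.inl t) : ℤ)).natAbs) < Δ := by
        rw [← hΔ]
        rw [hdecomp (fun t => ((m₂ (Sum.inl t) : ℤ) - (m' (Sum.inl t) : ℤ)).natAbs),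
          hdecomp (fun t => ((m (Sum.inl t) : ℤ) - (m' (Sum.inl t) : ℤ)).natAbs)]
        have hcongr : ∑ t ∈ (B.erase u).erase v,
            ((m₂ (Sum.inl t) : ℤ) - (m' (Sum.inl t) : ℤ)).natAbs
            = ∑ t ∈ (B.erase u).erase v,
              ((m (Sum.inl t) : ℤ) - (m' (Sum.inl t) : ℤ)).natAbs :=
          Finset.sum_congr rfl fun t ht => by rw [(hrest t ht).1]
        rw [hcongr]
        omega
      have hmem2 : monomial m₂ (1 : k) - monomial m' 1 ∈ Ideal.span (Qset A B) :=
        ih _ hΔ₂ m₂ m' rfl hm2eqv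
      have hsplit : monomial m (1 : k) - monomial m' 1
          = (monomial m (1 : k) - monomial m₂ 1) + (monomial m₂ 1 - monomial m' 1) := by
        ring
      rw [hsplit]
      exact add_mem hmem1 hmem2

-- chunk 7 : the membership criterion
section memb
variable {A B : Finset (Fin n)}

lemma bad_mem {g : Ring' k n} (h : ∀ m ∈ g.support, ¬ Ared A m) :
    g ∈ Ideal.span (Qset (k := k) A B) := by
  rw [← support_sum_monomial_coeff g]
  refine Ideal.sum_mem _ fun m hm => ?_
  have hbad := h m hm
  rw [Ared] at hbad
  push_neg at hbad
  obtain ⟨i, hiA, hb⟩ := hbad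
  by_cases hx : m (Sum.inl i) ≤ 1
  · -- then inr-coordinate is ≥ 2
    have hy : 2 ≤ m (Sum.inr i) := hb hx
    have hle : Finsupp.single (Sum.inr i) 2 ≤ m := Finsupp.single_le_iff.mpr hy
    have heq : monomial (m - Finsupp.single (Sum.inr i) 2) (coeff m g) * (yv i) ^ 2
        = monomial m (coeff m g) := by
      rw [yv, X_pow_eq_monomial, monomial_mul, mul_one, tsub_add_cancel_of_le hle]
    rw [← heq]
    exact Ideal.mul_mem_left _ _ (Ideal.subset_span (yv_sq_mem hiA))
  · have hx2 : 2 ≤ m (Sum.inl i) := by omega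
    have hle : Finsupp.single (Sum.inl i) 2 ≤ m := Finsupp.single_le_iff.mpr hx2
    have heq : monomial (m - Finsupp.single (Sum.inl i) 2) (coeff m g) * (xv i) ^ 2
        = monomial m (coeff m g) := by
      rw [xv, X_pow_eq_monomial, monomial_mul, mul_one, tsub_add_cancel_of_le hle]
    rw [← heq]
    exact Ideal.mul_mem_left _ _ (Ideal.subset_span (xv_sq_mem hiA))

lemma red_crit_mem [CharP k 2] :
    ∀ (N : ℕ) (g : Ring' k n), g.support.card ≤ N → (∀ m ∈ g.support, Ared A m) →
      crit A B g → g ∈ Ideal.span (Qset (k := k) A B) := by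
  intro N
  induction N with
  | zero =>
    intro g hcard _ _
    have : g.support = ∅ := Finset.card_eq_zero.mp (Nat.le_antisymm hcard (Nat.zero_le _))
    rw [MvPolynomial.support_eq_empty.mp this]
    exact zero_mem _
  | succ N ih =>
    intro g hcard hred hcrit
    by_cases hg0 : g = 0
    · rw [hg0]; exact zero_mem _
    have hne : g.support ≠ ∅ := fun h => hg0 (MvPolynomial.support_eq_empty.mp h)
    obtain ⟨m, hm⟩ := Finset.nonempty_of_ne_empty hne
    have hcl := hcrit m (hred m hm)
    have hexists : ∃ m' ∈ g.support, m' ≠ m ∧ eqv B m' m := by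
      by_contra hc
      push_neg at hc
      have hsum : clsum B g m = coeff m g := by
        rw [clsum, Finset.sum_eq_single m]
        · rw [if_pos (eqv_refl B m)]
        · intro m' hm' hne'
          exact if_neg fun he => (hc m' hm' hne') he
        · intro hms
          exact absurd hm hms
      rw [hcl] at hsum
      exact (mem_support_iff.mp hm) hsum.symm
    obtain ⟨m', hm's, hm'ne, hm'eqv⟩ := hexists
    set c' := coeff m' g with hc'
    set binom : Ring' k n := monomial m' c' - monomial m c' with hbin
    have hcb : crit A B binom := by
      intro mt _
      rw [hbin, clsum_sub, clsum_monomial, clsum_monomial]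
      by_cases h1 : eqv B m' mt
      · rw [if_pos h1, if_pos (eqv_trans (eqv_symm hm'eqv) h1), sub_self]
      · rw [if_neg h1, if_neg (fun h2 => h1 (eqv_trans hm'eqv h2)), sub_self]
    set g' := g - binom with hg'
    have hsupp' : g'.support ⊆ g.support.erase m' := by
      intro μ hμ
      rw [mem_support_iff, hg', coeff_sub, hbin, coeff_sub, coeff_monomial, coeff_monomial] at hμ
      rw [Finset.mem_erase, mem_support_iff]
      constructor
      · rintro rfl
        rw [if_pos rfl, if_neg (fun h : m = μ => hm'ne h.symm), hc'] at hμ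
        simp at hμ
      · intro h0
        by_cases hmμ : m' = μ
        · subst hmμ
          rw [if_pos rfl, if_neg (fun h : m = m' => hm'ne h.symm)] at hμ
          exact hμ (by rw [hc', h0]; ring)
        · by_cases hmm : m = μ
          · subst hmm
            exact (mem_support_iff.mp hm) h0
          · rw [if_neg hmμ, if_neg hmm, h0] at hμ
            simp at hμ
    have hcard' : g'.support.card ≤ N := by
      have h1 := Finset.card_le_card hsupp'
      rw [Finset.card_erase_of_mem hm's] at h1
      omega
    have hred' : ∀ μ ∈ g'.support, Ared A μ := fun μ hμ =>
      hred μ (Finset.mem_of_mem_erase (hsupp' hμ))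
    have hcrit' : crit A B g' := crit_sub hcrit hcb
    have hg'mem := ih g' hcard' hred' hcrit'
    have hbmem : binom ∈ Ideal.span (Qset (k := k) A B) := by
      have hb2 : binom = C c' * (monomial m' 1 - monomial m 1) := by
        rw [hbin, mul_sub, C_mul_monomial, C_mul_monomial]
        simp
      rw [hb2]
      exact Ideal.mul_mem_left _ _ (eqv_span _ m' m rfl hm'eqv)
    have hgeq : g = g' + binom := by rw [hg']; ring
    rw [hgeq]
    exact add_mem hg'mem hbmem

lemma eqv_sq_pair {u v : Fin n} (hu : u ∈ B) (hv : v ∈ B) (huv : u ≠ v) :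
    eqv B ((ex u + ey v) + (ex u + ey v) : M n) ((ex v + ey u) + (ex v + ey u)) := by
  refine ⟨?_, ?_, ?_, ?_⟩
  · intro w hw
    rw [exey2_apply, exey2_apply]
    have h1 : Sum.inl u ≠ w := fun h => hw (by rw [← h]; simpa using hu)
    have h2 : Sum.inr v ≠ w := fun h => hw (by rw [← h]; simpa using hv)
    have h3 : Sum.inl v ≠ w := fun h => hw (by rw [← h]; simpa using hv)
    have h4 : Sum.inr u ≠ w := fun h => hw (by rw [← h]; simpa using hu)
    rw [if_neg h1, if_neg h2, if_neg h3, if_neg h4]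
  · intro t _
    rw [exey2_apply, exey2_apply, exey2_apply, exey2_apply]
    by_cases htu : u = t <;> by_cases htv : v = t
    · exact absurd (htu.trans htv.symm) huv
    all_goals simp [htu, htv] <;> omega
  · intro t _
    rw [exey2_apply, exey2_apply]
    by_cases htu : u = t <;> by_cases htv : v = t
    · exact absurd (htu.trans htv.symm) huv
    all_goals simp [htu, htv]
  · have hL : ∀ t : Fin n, ((ex u + ey v) + (ex u + ey v) : M n) (Sum.inl t)
        = if u = t then 2 else 0 := by
      intro t
      rw [exey2_apply]
      simp
    have hR : ∀ t : Fin n, ((ex v + ey u) + (ex v + ey u) : M n) (Sum.inl t)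
        = if v = t then 2 else 0 := by
      intro t
      rw [exey2_apply]
      simp
    classical
    rw [Finset.sum_congr rfl (fun t _ => hL t), Finset.sum_congr rfl (fun t _ => hR t),
      Finset.sum_ite_eq, Finset.sum_ite_eq, if_pos hu, if_pos hv]

lemma crit_of_mem_span (hAB : ∀ i ∈ A, i ∉ B) {g : Ring' k n} [CharP k 2]
    (h : g ∈ Ideal.span (Qset (k := k) A B)) : crit A B g := by
  refine Submodule.span_induction ?_ crit_zero (fun q r _ _ hq hr => crit_add hq hr)
    (fun r q _ hq => by rw [smul_eq_mul]; exact crit_mul hAB hq r) h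
  rintro q ⟨s, hs, rfl⟩
  rcases hs with ⟨i, hiA, hxy⟩ | ⟨u, hu, v, hv, huv, rfl⟩
  · have hiB : i ∉ B := hAB i hiA
    rcases hxy with rfl | rfl
    · intro m hm
      show clsum B ((xv i) ^ 2) m = 0
      rw [xv, X_pow_eq_monomial, clsum_monomial]
      refine if_neg fun he => ?_
      have := eqv_coord he (v := Sum.inl i) (by simpa using hiB)
      rw [Finsupp.single_eq_same] at this
      have := (hm i hiA).1
      omega
    · intro m hm
      show clsum B ((yv i) ^ 2) m = 0
      rw [yv, X_pow_eq_monomial, clsum_monomial]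
      refine if_neg fun he => ?_
      have := eqv_coord he (v := Sum.inr i) (by simpa using hiB)
      rw [Finsupp.single_eq_same] at this
      have := (hm i hiA).2
      omega
  · intro m _
    show clsum B ((fb u v) ^ 2) m = 0
    rw [fb_sq, clsum_sub, clsum_monomial, clsum_monomial]
    have hee := eqv_sq_pair (n := n) hu hv huv
    by_cases h1 : eqv B ((ex u + ey v) + (ex u + ey v) : M n) m
    · rw [if_pos h1, if_pos (eqv_trans (eqv_symm hee) h1), sub_self]
    · rw [if_neg h1, if_neg (fun h2 => h1 (eqv_trans hee h2)), sub_self]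

lemma crit_badpart (hAB : ∀ i ∈ A, i ∉ B) (g : Ring' k n) :
    crit A B (proj (fun m => ¬ Ared A m) g) := by
  intro m hm
  rw [clsum]
  refine Finset.sum_eq_zero fun m' hm' => ?_
  refine if_neg fun he => ?_
  refine (support_proj hm').1 fun i hi => ?_
  have hx := eqv_coord he (v := Sum.inl i) (by simpa using hAB i hi)
  have hy := eqv_coord he (v := Sum.inr i) (by simpa using hAB i hi)
  have := hm i hi
  omega

lemma mem_span_iff_crit [CharP k 2] (hAB : ∀ i ∈ A, i ∉ B) (g : Ring' k n) :
    g ∈ Ideal.span (Qset (k := k) A B) ↔ crit A B g := by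
  constructor
  · exact crit_of_mem_span hAB
  · intro hcrit
    set gb := proj (fun m => ¬ Ared A m) g with hgb
    set gr := proj (fun m => Ared A m) g with hgr
    have hsplit : g = gr + gb := by
      apply MvPolynomial.ext
      intro m
      classical
      rw [coeff_add, hgr, hgb, coeff_proj, coeff_proj]
      by_cases h : Ared A m <;> simp [h]
    have hbmem : gb ∈ Ideal.span (Qset (k := k) A B) :=
      bad_mem fun m hm => (support_proj hm).1
    have hbcrit : crit A B gb := crit_badpart hAB g
    have hrcrit : crit A B gr := by
      have : gr = g - gb := by rw [hsplit]; ring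
      rw [this]
      exact crit_sub hcrit hbcrit
    have hrmem : gr ∈ Ideal.span (Qset (k := k) A B) :=
      red_crit_mem gr.support.card gr le_rfl (fun m hm => (support_proj hm).1) hrcrit
    rw [hsplit]
    exact add_mem hrmem hbmem

lemma frobPow_PAB_eq [CharP k 2] :
    frobPow (PAB (k := k) A B) 2 = Ideal.span (Qset (k := k) A B) := by
  apply le_antisymm
  · rw [frobPow]
    refine Ideal.span_le.mpr ?_
    rintro q ⟨g, hg, rfl⟩
    have hg' : g ∈ PAB (k := k) A B := hg
    refine Submodule.span_induction
      (p := fun x _ => x ^ 2 ∈ Ideal.span (Qset (k := k) A B)) ?_ ?_ ?_ ?_ hg'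
    · intro s hs
      exact Ideal.subset_span ⟨s, hs, rfl⟩
    · show (0 : Ring' k n) ^ 2 ∈ Ideal.span (Qset (k := k) A B)
      rw [zero_pow (two_ne_zero)]
      exact zero_mem _
    · intro x y _ _ hx hy
      show (x + y) ^ 2 ∈ Ideal.span (Qset (k := k) A B)
      have hxy : (x + y) ^ 2 = x ^ 2 + y ^ 2 := by
        linear_combination (x * y) * (two_zero (k := k) (n := n))
      rw [hxy]
      exact add_mem hx hy
    · intro r x _ hx
      show (r • x) ^ 2 ∈ Ideal.span (Qset (k := k) A B)
      rw [smul_eq_mul, mul_pow]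
      exact Ideal.mul_mem_left _ _ hx
  · refine Ideal.span_le.mpr ?_
    rintro q ⟨s, hs, rfl⟩
    refine Ideal.subset_span ⟨s, ?_, rfl⟩
    exact Ideal.subset_span hs

end memb

-- chunk 8 : helpers for the main induction
lemma exey_apply (i j : Fin n) (w : Fin n ⊕ Fin n) :
    (ex i + ey j : M n) w
      = (if Sum.inl i = w then 1 else 0) + (if Sum.inr j = w then 1 else 0) := by
  simp only [Finsupp.add_apply, ex, ey, Finsupp.single_apply]

lemma eqv_coord_invariant' {B : Finset (Fin n)} {v : Fin n ⊕ Fin n} (hv : idx v ∉ B) (d : ℕ) :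
    ∀ m m' : M n, eqv B m' m → (m' v = d ↔ m v = d) := by
  intro m m' he
  rw [eqv_coord he hv]

lemma proj_coord_mul'' {v₀ : Fin n ⊕ Fin n} {d d' : ℕ} {w : M n} (g : Ring' k n)
    (hw : w v₀ + d' = d) :
    proj (fun m => m v₀ = d) (monomial w (1 : k) * g)
      = monomial w 1 * proj (fun m => m v₀ = d') g := by
  have hle : w v₀ ≤ d := by omega
  have hd' : d - w v₀ = d' := by omega
  rw [proj_coord_mul _ _ hle, hd']

lemma crit_coordbad {A B : Finset (Fin n)} {i₀ : Fin n} (hi₀A : i₀ ∈ A) (hi₀B : i₀ ∉ B)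
    (g : Ring' k n) :
    crit A B (proj (fun m => ¬(m (Sum.inl i₀) ≤ 1 ∧ m (Sum.inr i₀) ≤ 1)) g) := by
  intro m hm
  rw [clsum]
  refine Finset.sum_eq_zero fun m' hm' => ?_
  refine if_neg fun he => ?_
  refine (support_proj hm').1 ?_
  have hx := eqv_coord he (v := Sum.inl i₀) (by simpa using hi₀B)
  have hy := eqv_coord he (v := Sum.inr i₀) (by simpa using hi₀B)
  have := hm i₀ hi₀A
  omega

/-- shift a polynomial, all of whose monomials have `x_{i₀}, y_{i₀}`-exponent one,
down by `x_{i₀} y_{i₀}` -/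
def sdown (i₀ : Fin n) (h : Ring' k n) : Ring' k n :=
  ∑ m ∈ h.support, monomial (m - (ex i₀ + ey i₀)) (coeff m h)

lemma sdown_mul {i₀ : Fin n} {h : Ring' k n}
    (hs : ∀ m ∈ h.support, m (Sum.inl i₀) = 1 ∧ m (Sum.inr i₀) = 1) :
    monomial (ex i₀ + ey i₀) (1 : k) * sdown i₀ h = h := by
  rw [sdown, Finset.mul_sum]
  have : ∀ m ∈ h.support,
      monomial (ex i₀ + ey i₀) (1 : k) * monomial (m - (ex i₀ + ey i₀)) (coeff m h)
        = monomial m (coeff m h) := by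
    intro m hm
    have hle : (ex i₀ + ey i₀ : M n) ≤ m := by
      rw [Finsupp.le_def]
      intro w
      rw [exey_apply]
      by_cases h1 : Sum.inl i₀ = w
      · have hv := (hs m hm).1
        subst h1
        simp [hv]
      · by_cases h2 : Sum.inr i₀ = w
        · have hv := (hs m hm).2
          subst h2
          simp [if_neg h1, hv]
        · rw [if_neg h1, if_neg h2]
          exact Nat.zero_le _
    rw [monomial_mul, one_mul, add_tsub_cancel_of_le hle]
  rw [Finset.sum_congr rfl this, support_sum_monomial_coeff]

lemma sdown_supp {i₀ : Fin n} {h : Ring' k n}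
    (hs : ∀ m ∈ h.support, m (Sum.inl i₀) = 1 ∧ m (Sum.inr i₀) = 1) :
    ∀ μ ∈ (sdown i₀ h).support, μ (Sum.inl i₀) = 0 ∧ μ (Sum.inr i₀) = 0 := by
  intro μ hμ
  rw [mem_support_iff, sdown, coeff_sum] at hμ
  obtain ⟨m, hm, hne⟩ := Finset.exists_ne_zero_of_sum_ne_zero hμ
  rw [coeff_monomial] at hne
  have heq : m - (ex i₀ + ey i₀) = μ := by
    by_contra hc
    rw [if_neg hc] at hne
    exact hne rfl
  have h1 := (hs m hm).1
  have h2 := (hs m hm).2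
  constructor
  · rw [← heq, Finsupp.tsub_apply, exey_apply]
    simp [h1]
  · rw [← heq, Finsupp.tsub_apply, exey_apply]
    simp [h2]

lemma support_sub' (p q : Ring' k n) : (p - q).support ⊆ p.support ∪ q.support := by
  intro m hm
  rw [mem_support_iff, coeff_sub] at hm
  rw [Finset.mem_union, mem_support_iff, mem_support_iff]
  by_contra hc
  push_neg at hc
  rw [hc.1, hc.2, sub_self] at hm
  exact hm rfl

lemma fb_supp_coord {i j : Fin n} {v : Fin n ⊕ Fin n}
    (h1 : v ≠ Sum.inl i) (h2 : v ≠ Sum.inr j) (h3 : v ≠ Sum.inl j) (h4 : v ≠ Sum.inr i) :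
    ∀ μ ∈ (fb i j : Ring' k n).support, μ v = 0 := by
  intro μ hμ
  rw [fb_eq] at hμ
  have := support_sub' (monomial (ex i + ey j) (1:k)) (monomial (ex j + ey i) 1) hμ
  rw [Finset.mem_union] at this
  rcases this with hμ' | hμ'
  · have h := support_monomial_subset hμ'
    rw [Finset.mem_singleton] at h
    rw [h, exey_apply, if_neg (fun hh => h1 hh.symm), if_neg (fun hh => h2 hh.symm)]
  · have h := support_monomial_subset hμ'
    rw [Finset.mem_singleton] at h
    rw [h, exey_apply, if_neg (fun hh => h3 hh.symm), if_neg (fun hh => h4 hh.symm)]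

/-- the four-fold decomposition of a polynomial by its `(x_{i₀}, y_{i₀})`-bidegree -/
lemma decomp4 (i₀ : Fin n) (g : Ring' k n) :
    g = proj (fun m => m (Sum.inl i₀) = 0) (proj (fun m => m (Sum.inr i₀) = 0) g)
      + proj (fun m => m (Sum.inl i₀) = 1) (proj (fun m => m (Sum.inr i₀) = 0) g)
      + proj (fun m => m (Sum.inl i₀) = 0) (proj (fun m => m (Sum.inr i₀) = 1) g)
      + proj (fun m => m (Sum.inl i₀) = 1) (proj (fun m => m (Sum.inr i₀) = 1) g)
      + proj (fun m => ¬(m (Sum.inl i₀) ≤ 1 ∧ m (Sum.inr i₀) ≤ 1)) g := by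
  apply MvPolynomial.ext
  intro m
  classical
  simp only [coeff_add, coeff_proj]
  split_ifs <;> first | ring1 | (exfalso; omega)

-- chunk 9 : the main induction
lemma main_lemma [CharP k 2] {a b c : Fin n} {B : Finset (Fin n)}
    (hbB : b ∉ B) (hab : a ≠ b) (hcb : c ≠ b) :
    ∀ A : Finset (Fin n), (∀ i ∈ A, i ≠ a ∧ i ≠ b ∧ i ≠ c ∧ i ∉ B) →
      ∀ g : Ring' k n,
        (∀ i ∈ A, ∃ e : Fin n, (e = a ∨ e = c) ∧
          crit A B (g * fb i b) ∧ crit A B (g * fb i e)) →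
        ∃ q r : Ring' k n, crit A B q ∧ g = q + r * omegaA A := by
  intro A
  induction A using Finset.induction_on with
  | empty =>
    intro _ g _
    exact ⟨0, g, crit_zero, by rw [omegaA, Finset.prod_empty]; ring⟩
  | @insert i₀ s hi₀s ih =>
    intro hA g hg
    classical
    have hAB : ∀ i ∈ insert i₀ s, i ∉ B := fun i hi => (hA i hi).2.2.2
    have hABs : ∀ i ∈ s, i ∉ B := fun i hi => hAB i (Finset.mem_insert_of_mem hi)
    have hsub : s ⊆ insert i₀ s := Finset.subset_insert i₀ s
    have hi₀A : i₀ ∈ insert i₀ s := Finset.mem_insert_self i₀ s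
    have hi₀B : i₀ ∉ B := hAB i₀ hi₀A
    have hi₀a : i₀ ≠ a := (hA i₀ hi₀A).1
    have hi₀b : i₀ ≠ b := (hA i₀ hi₀A).2.1
    have hi₀c : i₀ ≠ c := (hA i₀ hi₀A).2.2.1
    have hbA : b ∉ insert i₀ s := fun hb => (hA b hb).2.1 rfl
    have haA : a ∉ insert i₀ s := fun ha => (hA a ha).1 rfl
    have hcA : c ∉ insert i₀ s := fun hc => (hA c hc).2.2.1 rfl
    have hbs : b ∉ s := fun h => hbA (hsub h)
    obtain ⟨e₀, he₀ac, hgb, hge⟩ := hg i₀ hi₀A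
    have he₀A : e₀ ∉ insert i₀ s := by rcases he₀ac with rfl | rfl; exacts [haA, hcA]
    have he₀s : e₀ ∉ s := fun h => he₀A (hsub h)
    have he₀b : e₀ ≠ b := by rcases he₀ac with rfl | rfl; exacts [hab, hcb]
    have hi₀e : i₀ ≠ e₀ := by rcases he₀ac with rfl | rfl; exacts [hi₀a, hi₀c]
    -- the four components and the bad part
    set w00 := proj (fun m => m (Sum.inl i₀) = 0) (proj (fun m => m (Sum.inr i₀) = 0) g)
      with hw00def
    set w10 := proj (fun m => m (Sum.inl i₀) = 1) (proj (fun m => m (Sum.inr i₀) = 0) g)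
      with hw10def
    set w01 := proj (fun m => m (Sum.inl i₀) = 0) (proj (fun m => m (Sum.inr i₀) = 1) g)
      with hw01def
    set w11 := proj (fun m => m (Sum.inl i₀) = 1) (proj (fun m => m (Sum.inr i₀) = 1) g)
      with hw11def
    set gbad := proj (fun m => ¬(m (Sum.inl i₀) ≤ 1 ∧ m (Sum.inr i₀) ≤ 1)) g with hgbaddef
    have hdec : g = w00 + w10 + w01 + w11 + gbad := decomp4 i₀ g
    -- coordinate values
    have hb1 : (ex i₀ + ey b : M n) (Sum.inl i₀) = 1 := by rw [exey_apply]; simp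
    have hb2 : (ex i₀ + ey b : M n) (Sum.inr i₀) = 0 := by
      rw [exey_apply]; simp [Ne.symm hi₀b]
    have hb3 : (ex b + ey i₀ : M n) (Sum.inl i₀) = 0 := by
      rw [exey_apply]; simp [Ne.symm hi₀b]
    have hb4 : (ex b + ey i₀ : M n) (Sum.inr i₀) = 1 := by rw [exey_apply]; simp
    have hw1 : (ex i₀ + ey i₀ : M n) (Sum.inl i₀) = 1 := by rw [exey_apply]; simp
    have hw2 : (ex i₀ + ey i₀ : M n) (Sum.inr i₀) = 1 := by rw [exey_apply]; simp
    -- support facts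
    have sw00 : ∀ μ ∈ w00.support, μ (Sum.inl i₀) = 0 ∧ μ (Sum.inr i₀) = 0 := fun μ hμ =>
      ⟨(support_proj hμ).1, (support_proj (support_proj hμ).2).1⟩
    have sw10 : ∀ μ ∈ w10.support, μ (Sum.inl i₀) = 1 ∧ μ (Sum.inr i₀) = 0 := fun μ hμ =>
      ⟨(support_proj hμ).1, (support_proj (support_proj hμ).2).1⟩
    have sw01 : ∀ μ ∈ w01.support, μ (Sum.inl i₀) = 0 ∧ μ (Sum.inr i₀) = 1 := fun μ hμ =>
      ⟨(support_proj hμ).1, (support_proj (support_proj hμ).2).1⟩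
    have sw11 : ∀ μ ∈ w11.support, μ (Sum.inl i₀) = 1 ∧ μ (Sum.inr i₀) = 1 := fun μ hμ =>
      ⟨(support_proj hμ).1, (support_proj (support_proj hμ).2).1⟩
    -- the key product identities
    have keyI : ∀ j : Fin n, j ≠ i₀ →
        (proj (fun m => m (Sum.inl i₀) = 1)
            (proj (fun m => m (Sum.inr i₀) = 0) (g * fb i₀ j))
          = monomial (ex i₀ + ey j) 1 * w00)
        ∧ (proj (fun m => m (Sum.inl i₀) = 1)
            (proj (fun m => m (Sum.inr i₀) = 1) (g * fb i₀ j))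
          = monomial (ex i₀ + ey j) 1 * w01 - monomial (ex j + ey i₀) 1 * w10) := by
      intro j hji
      have hc1 : (ex i₀ + ey j : M n) (Sum.inl i₀) = 1 := by rw [exey_apply]; simp
      have hc2 : (ex i₀ + ey j : M n) (Sum.inr i₀) = 0 := by rw [exey_apply]; simp [hji]
      have hc3 : (ex j + ey i₀ : M n) (Sum.inl i₀) = 0 := by rw [exey_apply]; simp [hji]
      have hc4 : (ex j + ey i₀ : M n) (Sum.inr i₀) = 1 := by rw [exey_apply]; simp
      have hmulF : g * fb i₀ j
          = monomial (ex i₀ + ey j) 1 * g - monomial (ex j + ey i₀) 1 * g := by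
        rw [fb_eq]; ring
      constructor
      · rw [hmulF, proj_sub, proj_coord_mul'' (d' := 0) g (by rw [hc2]),
          proj_coord_mul_zero _ _ (by rw [hc4]; omega), sub_zero,
          proj_coord_mul'' (d' := 0) _ (by rw [hc1])]
      · rw [hmulF, proj_sub, proj_coord_mul'' (d' := 1) g (by rw [hc2]),
          proj_coord_mul'' (d' := 0) g (by rw [hc4]), proj_sub,
          proj_coord_mul'' (d' := 0) _ (by rw [hc1]),
          proj_coord_mul'' (d' := 1) _ (by rw [hc3])]
    -- invariance of the coordinate predicates
    have hinvl : ∀ d : ℕ, ∀ m m' : M n, eqv B m' m →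
        (m' (Sum.inl i₀) = d ↔ m (Sum.inl i₀) = d) := fun d =>
      eqv_coord_invariant' (v := Sum.inl i₀) (by simpa using hi₀B) d
    have hinvr : ∀ d : ℕ, ∀ m m' : M n, eqv B m' m →
        (m' (Sum.inr i₀) = d ↔ m (Sum.inr i₀) = d) := fun d =>
      eqv_coord_invariant' (v := Sum.inr i₀) (by simpa using hi₀B) d
    -- w00 is critical
    have c00 : crit s B w00 := by
      have h1 := crit_proj (hinvl 1) (crit_proj (hinvr 0) hgb)
      rw [(keyI b (Ne.symm hi₀b)).1] at h1
      refine crit_shift_cancel (shiftw_ok hi₀s hbs) (crit_EX hi₀B ?_ h1)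
      intro m hm
      obtain ⟨μ, hμ, rfl⟩ := support_monomial_mul' hm
      have h2 := sw00 μ hμ
      refine ⟨?_, ?_⟩
      · rw [Finsupp.add_apply, hb1]; omega
      · rw [Finsupp.add_apply, hb2]; omega
    -- the (1,1)-components of the two edge conditions
    have hb11 : crit s B
        (monomial (ex i₀ + ey b) 1 * w01 - monomial (ex b + ey i₀) 1 * w10) := by
      have h1 := crit_proj (hinvl 1) (crit_proj (hinvr 1) hgb)
      rw [(keyI b (Ne.symm hi₀b)).2] at h1
      refine crit_EX hi₀B ?_ h1
      intro m hm
      have hm' := support_sub' _ _ hm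
      rw [Finset.mem_union] at hm'
      rcases hm' with h | h
      · obtain ⟨μ, hμ, rfl⟩ := support_monomial_mul' h
        have h2 := sw01 μ hμ
        refine ⟨?_, ?_⟩
        · rw [Finsupp.add_apply, hb1]; omega
        · rw [Finsupp.add_apply, hb2]; omega
      · obtain ⟨μ, hμ, rfl⟩ := support_monomial_mul' h
        have h2 := sw10 μ hμ
        refine ⟨?_, ?_⟩
        · rw [Finsupp.add_apply, hb3]; omega
        · rw [Finsupp.add_apply, hb4]; omega
    have he11 : crit s B
        (monomial (ex i₀ + ey e₀) 1 * w01 - monomial (ex e₀ + ey i₀) 1 * w10) := by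
      have he1 : (ex i₀ + ey e₀ : M n) (Sum.inl i₀) = 1 := by rw [exey_apply]; simp
      have he2 : (ex i₀ + ey e₀ : M n) (Sum.inr i₀) = 0 := by
        rw [exey_apply]; simp [Ne.symm hi₀e]
      have he3 : (ex e₀ + ey i₀ : M n) (Sum.inl i₀) = 0 := by
        rw [exey_apply]; simp [Ne.symm hi₀e]
      have he4 : (ex e₀ + ey i₀ : M n) (Sum.inr i₀) = 1 := by rw [exey_apply]; simp
      have h1 := crit_proj (hinvl 1) (crit_proj (hinvr 1) hge)
      rw [(keyI e₀ (Ne.symm hi₀e)).2] at h1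
      refine crit_EX hi₀B ?_ h1
      intro m hm
      have hm' := support_sub' _ _ hm
      rw [Finset.mem_union] at hm'
      rcases hm' with h | h
      · obtain ⟨μ, hμ, rfl⟩ := support_monomial_mul' h
        have h2 := sw01 μ hμ
        refine ⟨?_, ?_⟩
        · rw [Finsupp.add_apply, he1]; omega
        · rw [Finsupp.add_apply, he2]; omega
      · obtain ⟨μ, hμ, rfl⟩ := support_monomial_mul' h
        have h2 := sw10 μ hμ
        refine ⟨?_, ?_⟩
        · rw [Finsupp.add_apply, he3]; omega
        · rw [Finsupp.add_apply, he4]; omega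
    -- the combination giving w10
    have hyv : ∀ j : Fin n, (yv j : Ring' k n) = monomial (ey j) 1 := fun j => rfl
    have hA1 : (yv e₀ : Ring' k n) * monomial (ex i₀ + ey b) 1
        = yv b * monomial (ex i₀ + ey e₀) 1 := by
      rw [hyv, hyv, monomial_mul, monomial_mul, one_mul]
      have : (ey e₀ + (ex i₀ + ey b) : M n) = ey b + (ex i₀ + ey e₀) := by abel
      rw [this]
    have hA2 : (yv e₀ : Ring' k n) * monomial (ex b + ey i₀) 1
        = monomial ((ex b + ey e₀) + ey i₀) 1 := by
      rw [hyv, monomial_mul, one_mul]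
      have : (ey e₀ + (ex b + ey i₀) : M n) = (ex b + ey e₀) + ey i₀ := by abel
      rw [this]
    have hA3 : (yv b : Ring' k n) * monomial (ex e₀ + ey i₀) 1
        = monomial ((ex e₀ + ey b) + ey i₀) 1 := by
      rw [hyv, monomial_mul, one_mul]
      have : (ey b + (ex e₀ + ey i₀) : M n) = (ex e₀ + ey b) + ey i₀ := by abel
      rw [this]
    have hA4 : (fb b e₀ : Ring' k n) * monomial (ey i₀) 1
        = monomial ((ex b + ey e₀) + ey i₀) 1 - monomial ((ex e₀ + ey b) + ey i₀) 1 := by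
      rw [fb_eq, sub_mul, monomial_mul, monomial_mul, one_mul]
    have hcomb : (yv e₀ : Ring' k n)
          * (monomial (ex i₀ + ey b) 1 * w01 - monomial (ex b + ey i₀) 1 * w10)
        - yv b * (monomial (ex i₀ + ey e₀) 1 * w01 - monomial (ex e₀ + ey i₀) 1 * w10)
        = -(fb b e₀ * (monomial (ey i₀) 1 * w10)) := by
      have h5 : (fb b e₀ : Ring' k n) * (monomial (ey i₀) 1 * w10)
          = (yv e₀ * monomial (ex b + ey i₀) 1 - yv b * monomial (ex e₀ + ey i₀) 1)
            * w10 := by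
        rw [← mul_assoc, hA4, hA2, hA3]
      rw [h5]
      have h6 : (yv e₀ : Ring' k n)
            * (monomial (ex i₀ + ey b) 1 * w01 - monomial (ex b + ey i₀) 1 * w10)
          - yv b * (monomial (ex i₀ + ey e₀) 1 * w01 - monomial (ex e₀ + ey i₀) 1 * w10)
          = (yv e₀ * monomial (ex i₀ + ey b) 1 - yv b * monomial (ex i₀ + ey e₀) 1) * w01
            - (yv e₀ * monomial (ex b + ey i₀) 1 - yv b * monomial (ex e₀ + ey i₀) 1)
              * w10 := by ring
      rw [h6, hA1, sub_self, zero_mul, zero_sub]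
    have hfbw : crit s B ((fb b e₀ : Ring' k n) * (monomial (ey i₀) 1 * w10)) := by
      have h7 : crit s B (-(fb b e₀ * (monomial (ey i₀) 1 * w10))) := by
        rw [← hcomb]
        exact crit_sub (crit_mul hABs hb11 (yv e₀)) (crit_mul hABs he11 (yv b))
      have h8 := crit_neg h7
      rwa [neg_neg] at h8
    have heyok : ∀ i ∈ s, (ey i₀ : M n) (Sum.inl i) = 0 ∧ (ey i₀ : M n) (Sum.inr i) = 0 := by
      intro i hi
      constructor
      · simp [ey, Finsupp.single_apply]
      · have : i₀ ≠ i := fun h => hi₀s (h ▸ hi)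
        simp [ey, Finsupp.single_apply, this]
    have c10 : crit s B w10 := by
      have hN := crit_fbe_cancel hABs hbs hbB he₀s (Ne.symm he₀b)
        ((monomial (ey i₀) (1 : k) * w10).support.sup fun m => m (Sum.inl b))
        (monomial (ey i₀) (1 : k) * w10)
        (fun m hm => Finset.le_sup (f := fun m => m (Sum.inl b)) hm) hfbw
      exact crit_shift_cancel heyok hN
    have c01 : crit s B w01 := by
      have h6 : monomial (ex i₀ + ey b) (1 : k) * w01
          = (monomial (ex i₀ + ey b) 1 * w01 - monomial (ex b + ey i₀) 1 * w10)
            + monomial (ex b + ey i₀) 1 * w10 := by ring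
      have h7 : crit s B (monomial (ex i₀ + ey b) (1 : k) * w01) := by
        rw [h6]
        exact crit_add hb11 (crit_monomial_mul hABs c10 _ _)
      exact crit_shift_cancel (shiftw_ok hi₀s hbs) h7
    -- assemble the critical part
    have cbad : crit (insert i₀ s) B gbad := crit_coordbad hi₀A hi₀B g
    have cG : crit (insert i₀ s) B (g - w11) := by
      have h9 : g - w11 = w00 + w10 + w01 + gbad := by rw [hdec]; ring
      rw [h9]
      exact crit_add (crit_add (crit_add (crit_mono hsub c00) (crit_mono hsub c10))
        (crit_mono hsub c01)) cbad
    -- the shifted-down middle part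
    set δ := sdown i₀ w11 with hδdef
    have hδ : monomial (ex i₀ + ey i₀) (1 : k) * δ = w11 := sdown_mul sw11
    have hδs := sdown_supp sw11
    -- transfer of the conditions to δ
    have hstep : ∀ i j : Fin n, i ≠ i₀ → j ≠ i₀ →
        crit (insert i₀ s) B (g * fb i j) → crit s B (δ * fb i j) := by
      intro i j hii₀ hji₀ hcg
      have h1 : crit (insert i₀ s) B (monomial (ex i₀ + ey i₀) 1 * (δ * fb i j)) := by
        have heq : monomial (ex i₀ + ey i₀) (1 : k) * (δ * fb i j)
            = g * fb i j - fb i j * (g - w11) := by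
          have h2 : monomial (ex i₀ + ey i₀) (1 : k) * (δ * fb i j)
              = (monomial (ex i₀ + ey i₀) (1 : k) * δ) * fb i j := by ring
          rw [h2, hδ]; ring
        rw [heq]
        exact crit_sub hcg (crit_mul hAB cG (fb i j))
      refine crit_shift_cancel (shiftw_ok hi₀s hi₀s) (crit_EX hi₀B ?_ h1)
      intro m hm
      obtain ⟨μ, hμ, rfl⟩ := support_monomial_mul' hm
      have hμ2 := MvPolynomial.support_mul _ _ hμ
      rw [Finset.mem_add] at hμ2
      obtain ⟨μ₁, hμ₁, μ₂, hμ₂, rfl⟩ := hμ2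
      have d1 := hδs μ₁ hμ₁
      have d2 : μ₂ (Sum.inl i₀) = 0 :=
        fb_supp_coord (by simp [Ne.symm hii₀]) (by simp) (by simp [Ne.symm hji₀]) (by simp)
          μ₂ hμ₂
      have d3 : μ₂ (Sum.inr i₀) = 0 :=
        fb_supp_coord (by simp) (by simp [Ne.symm hji₀]) (by simp) (by simp [Ne.symm hii₀])
          μ₂ hμ₂
      refine ⟨?_, ?_⟩
      · rw [Finsupp.add_apply, hw1, Finsupp.add_apply]; omega
      · rw [Finsupp.add_apply, hw2, Finsupp.add_apply]; omega
    have hδcond : ∀ i ∈ s, ∃ e : Fin n, (e = a ∨ e = c) ∧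
        crit s B (δ * fb i b) ∧ crit s B (δ * fb i e) := by
      intro i his
      obtain ⟨e, heac, hib, hie⟩ := hg i (Finset.mem_insert_of_mem his)
      have hii₀ : i ≠ i₀ := fun h => hi₀s (h ▸ his)
      have heA : e ∉ insert i₀ s := by rcases heac with rfl | rfl; exacts [haA, hcA]
      have hei₀ : e ≠ i₀ := fun h => heA (by rw [h]; exact hi₀A)
      exact ⟨e, heac, hstep i b hii₀ (Ne.symm hi₀b) hib, hstep i e hii₀ hei₀ hie⟩
    obtain ⟨q', r', hq', hδeq⟩ := ih (fun i hi => hA i (Finset.mem_insert_of_mem hi)) δ hδcond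
    refine ⟨(g - w11) + monomial (ex i₀ + ey i₀) 1 * q', r', ?_, ?_⟩
    · exact crit_add cG (crit_monomial_mul hAB (crit_mono hsub hq') _ _)
    · have homega : omegaA (insert i₀ s) = monomial (ex i₀ + ey i₀) (1 : k) * omegaA s := by
        rw [omegaA, omegaA, Finset.prod_insert hi₀s, xv_mul_yv]
      calc g = (g - w11) + w11 := by ring
      _ = (g - w11) + monomial (ex i₀ + ey i₀) 1 * (q' + r' * omegaA s) := by
          rw [← hδ, hδeq]
      _ = ((g - w11) + monomial (ex i₀ + ey i₀) 1 * q')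
            + r' * (monomial (ex i₀ + ey i₀) 1 * omegaA s) := by ring
      _ = ((g - w11) + monomial (ex i₀ + ey i₀) 1 * q') + r' * omegaA (insert i₀ s) := by
          rw [← homega]

lemma omega_fb_mem {A B : Finset (Fin n)} {i : Fin n} (hiA : i ∈ A) (j : Fin n) :
    omegaA (k := k) A * fb i j ∈ Ideal.span (Qset (k := k) A B) := by
  have hmul : omegaA (k := k) A = (xv i * yv i) * ∏ x ∈ A.erase i, (xv x * yv x) :=
    (Finset.mul_prod_erase A _ hiA).symm
  have hx2 : omegaA (k := k) A * fb i j
      = ((∏ x ∈ A.erase i, (xv x * yv x)) * (yv i * yv j)) * (xv i) ^ 2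
        - ((∏ x ∈ A.erase i, (xv x * yv x)) * (xv i * xv j)) * (yv i) ^ 2 := by
    rw [hmul, fb]; ring
  rw [hx2]
  exact sub_mem (Ideal.mul_mem_left _ _ (Ideal.subset_span (xv_sq_mem hiA)))
    (Ideal.mul_mem_left _ _ (Ideal.subset_span (yv_sq_mem hiA)))


/-- in characteristic `2`, for distinct `a, b, c`,
`A ⊆ {1,…,n}∖{a,b,c}`, `B ⊆ {1,…,n}∖(A ∪ {b})`, and a graph `G` in which every vertex of
`A` is adjacent to `b`, every vertex of `A` is adjacent to `a` or to `c`, and every edge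
has an endpoint in `A`, one has `P(A,B)^{[2]} : J_G = P(A,B)^{[2]} + (ω_A)`. -/
theorem colon_computation_T_empty (k : Type*) [Field k] [CharP k 2] (n : ℕ)
    (a b c : Fin n) (hab : a ≠ b) (hbc : b ≠ c) (hac : a ≠ c)
    (A B : Finset (Fin n))
    (hA : ∀ i ∈ A, i ≠ a ∧ i ≠ b ∧ i ≠ c)
    (hB : ∀ i ∈ B, i ∉ A ∧ i ≠ b)
    (G : SimpleGraph (Fin n))
    (h1 : ∀ i ∈ A, G.Adj i b)
    (h2 : ∀ i ∈ A, G.Adj i a ∨ G.Adj i c)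
    (h3 : ∀ i j : Fin n, G.Adj i j → i ∈ A ∨ j ∈ A) :
    Submodule.colon (frobPow (PAB (k := k) A B) 2) (beIdeal (k := k) G)
      = frobPow (PAB (k := k) A B) 2 ⊔ Ideal.span {omegaA (k := k) A} := by
  have hAB : ∀ i ∈ A, i ∉ B := fun i hi hiB => (hB i hiB).1 hi
  have hbB' : b ∉ B := fun h => (hB b h).2 rfl
  apply le_antisymm
  · intro g hg
    have hcrit : ∀ i ∈ A, ∃ e : Fin n, (e = a ∨ e = c) ∧
        crit A B (g * fb i b) ∧ crit A B (g * fb i e) := by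
      intro i hiA
      have hmem : ∀ j : Fin n, G.Adj i j → crit A B (g * fb i j) := by
        intro j hadj
        have hfb : (fb i j : Ring' k n) ∈ beIdeal (k := k) G :=
          Ideal.subset_span ⟨i, j, hadj, rfl⟩
        have hq := Submodule.mem_colon.mp hg _ hfb
        rw [smul_eq_mul, frobPow_PAB_eq] at hq
        exact (mem_span_iff_crit hAB _).mp hq
      rcases h2 i hiA with ha' | hc'
      · exact ⟨a, Or.inl rfl, hmem b (h1 i hiA), hmem a ha'⟩
      · exact ⟨c, Or.inr rfl, hmem b (h1 i hiA), hmem c hc'⟩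
    have hAcond : ∀ i ∈ A, i ≠ a ∧ i ≠ b ∧ i ≠ c ∧ i ∉ B := fun i hi =>
      ⟨(hA i hi).1, (hA i hi).2.1, (hA i hi).2.2, hAB i hi⟩
    obtain ⟨q, r, hq, hgeq⟩ := main_lemma hbB' hab (Ne.symm hbc) A hAcond g hcrit
    rw [hgeq]
    refine Submodule.add_mem _ ?_ ?_
    · apply Submodule.mem_sup_left
      rw [frobPow_PAB_eq]
      exact (mem_span_iff_crit hAB q).mpr hq
    · exact Submodule.mem_sup_right (Ideal.mem_span_singleton'.mpr ⟨r, rfl⟩)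
  · refine sup_le ?_ ?_
    · intro q hq
      rw [Submodule.mem_colon]
      intro p hp
      rw [smul_eq_mul]
      exact Ideal.mul_mem_right p _ hq
    · rw [Ideal.span_le]
      intro w hw
      rw [Set.mem_singleton_iff] at hw
      subst hw
      rw [SetLike.mem_coe, Submodule.mem_colon]
      intro p hp
      rw [smul_eq_mul, frobPow_PAB_eq]
      refine Submodule.span_induction
        (p := fun z _ => omegaA (k := k) A * z ∈ Ideal.span (Qset (k := k) A B))
        ?_ ?_ ?_ ?_ hp
      · rintro z ⟨i, j, hadj, rfl⟩
        rcases h3 i j hadj with hiA | hjA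
        · exact omega_fb_mem hiA j
        · have hneg : omegaA (k := k) A * fb i j = -(omegaA (k := k) A * fb j i) := by
            rw [fb, fb]; ring
          rw [hneg]
          exact neg_mem (omega_fb_mem hjA i)
      · show omegaA (k := k) A * 0 ∈ _
        rw [mul_zero]; exact zero_mem _
      · intro x y _ _ hx hy
        show omegaA (k := k) A * (x + y) ∈ _
        rw [mul_add]; exact add_mem hx hy
      · intro r x _ hx
        show omegaA (k := k) A * (r • x) ∈ _
        rw [smul_eq_mul]
        have hcm : omegaA (k := k) A * (r * x) = r * (omegaA (k := k) A * x) := by ring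
        rw [hcm]
        exact Ideal.mul_mem_left _ _ hx

end BEI
end
end

section
/- Let k be a field of characteristic 2 and let A, B be disjoint subsets of {1,…,n}. Set P = P(A,B), and let G be a finite simple graph on {1,…,n} all of whose edges have both endpoints in B. Then P^{[2]} : J_G = P^{[2]} + (P(∅,B)^{[2]} : J_G). -/
open MvPolynomial

noncomputable section

namespace BEI

variable {k : Type*} [CommRing k] {n : ℕ}

set_option linter.unusedSectionVars false

section Aux

variable {K : Type*} [Field K] [CharP K 2] {n : ℕ}

/-- The set of variables indexed by `A`. -/
def AV (A : Finset (Fin n)) : Set (Fin n ⊕ Fin n) := {v | Sum.elim (· ∈ A) (· ∈ A) v}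

/-- An exponent vector is `good` if all its exponents on `A`-variables are at most 1. -/
def good (A : Finset (Fin n)) (d : (Fin n ⊕ Fin n) →₀ ℕ) : Prop := ∀ v ∈ AV A, d v ≤ 1

noncomputable instance goodDec (A : Finset (Fin n)) : DecidablePred (good A) :=
  fun _ => Classical.dec _

/-- Truncation: keep only the `good` monomials. -/
noncomputable def Tm (A : Finset (Fin n)) : Ring' K n →+ Ring' K n :=
  (AddMonoidAlgebra.coeffAddEquiv.symm.toAddMonoidHom).comp
    ((Finsupp.filterAddHom (good A)).comp AddMonoidAlgebra.coeffAddEquiv.toAddMonoidHom)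

lemma coeff_Tm (A : Finset (Fin n)) (p : Ring' K n) (e : (Fin n ⊕ Fin n) →₀ ℕ) :
    coeff e (Tm A p) = if good A e then coeff e p else 0 :=
  Finsupp.filter_apply (good A) (AddMonoidAlgebra.coeff p) e

/-- generators of the `A`-part of `P(A,B)`. -/
def SA (A : Finset (Fin n)) : Set (Ring' K n) := {g | ∃ i ∈ A, g = xv i ∨ g = yv i}

/-- generators of the `B`-part of `P(A,B)`. -/
def SB (B : Finset (Fin n)) : Set (Ring' K n) :=
  {g | ∃ a ∈ B, ∃ b ∈ B, a ≠ b ∧ g = fb a b}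

lemma frobPow_span (S : Set (Ring' K n)) :
    frobPow (Ideal.span S) 2 = Ideal.span ((· ^ 2) '' S) := by
  apply le_antisymm
  · rw [frobPow, Ideal.span_le]
    rintro _ ⟨f, hf, rfl⟩
    obtain ⟨c, hc, rfl⟩ := Submodule.mem_span_set.mp hf
    simp only [SetLike.mem_coe]
    have h2 : (c.sum fun g r => r • g) ^ 2 = c.sum fun g r => r ^ 2 * g ^ 2 := by
      have := map_finsuppSum (frobenius (Ring' K n) 2) c (fun g r => r • g)
      simpa [frobenius_def, smul_eq_mul, mul_pow] using this
    rw [h2]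
    exact Submodule.sum_mem _ fun g hg =>
      Ideal.mul_mem_left _ _ (Ideal.subset_span ⟨g, hc hg, rfl⟩)
  · exact Ideal.span_mono (Set.image_mono Ideal.subset_span)

lemma azero_of_supported {A : Finset (Fin n)} {q : Ring' K n}
    (hq : q ∈ supported K ((AV A)ᶜ)) {d : (Fin n ⊕ Fin n) →₀ ℕ} (hd : d ∈ q.support)
    {v : Fin n ⊕ Fin n} (hv : v ∈ AV A) : d v = 0 := by
  by_contra h
  have hvd : v ∈ d.support := Finsupp.mem_support_iff.mpr h
  have hvv : v ∈ q.vars := (mem_vars v).mpr ⟨d, hd, hvd⟩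
  exact (mem_supported.mp hq hvv) hv

lemma Tm_mul {A : Finset (Fin n)} (p q : Ring' K n) (hq : q ∈ supported K ((AV A)ᶜ)) :
    Tm A (p * q) = Tm A p * q := by
  apply MvPolynomial.ext
  intro e
  rw [coeff_Tm, coeff_mul, coeff_mul]
  have key : ∀ x ∈ Finset.HasAntidiagonal.antidiagonal e,
      (if good A x.1 then coeff x.1 p else 0) * coeff x.2 q
        = if good A e then coeff x.1 p * coeff x.2 q else 0 := by
    rintro ⟨u, v⟩ hx
    by_cases hv : coeff v q = 0
    · simp [hv]
    · have huv : u + v = e := Finset.HasAntidiagonal.mem_antidiagonal.mp hx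
      have hvz : ∀ w ∈ AV A, v w = 0 :=
        fun w hw => azero_of_supported hq (Finsupp.mem_support_iff.mpr hv) hw
      have hiff : good A u ↔ good A e := by
        constructor <;> intro h w hw <;> have := h w hw <;>
          have he : e w = u w + v w := by rw [← huv]; rfl
        · rw [he, hvz w hw]; omega
        · rw [he, hvz w hw] at this; omega
      by_cases h : good A e
      · rw [if_pos h, if_pos (hiff.mpr h)]
      · rw [if_neg h, if_neg (fun hu => h (hiff.mp hu)), zero_mul]
  calc (if good A e then ∑ x ∈ Finset.HasAntidiagonal.antidiagonal e, coeff x.1 p * coeff x.2 q else 0)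
      = ∑ x ∈ Finset.HasAntidiagonal.antidiagonal e,
          (if good A e then coeff x.1 p * coeff x.2 q else 0) := by
        split_ifs with h
        · rfl
        · rw [Finset.sum_const_zero]
    _ = ∑ x ∈ Finset.HasAntidiagonal.antidiagonal e, coeff x.1 (Tm A p) * coeff x.2 q := by
        apply Finset.sum_congr rfl
        intro x hx
        rw [coeff_Tm, key x hx]

lemma Tm_sq_mul {A : Finset (Fin n)} (r : Ring' K n) {v : Fin n ⊕ Fin n} (hv : v ∈ AV A) :
    Tm A (r * X v ^ 2) = 0 := by
  apply MvPolynomial.ext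
  intro e
  rw [coeff_Tm, coeff_zero]
  split_ifs with he
  · rw [X_pow_eq_monomial, coeff_mul_monomial', if_neg]
    intro hle
    have h2 : 2 ≤ e v := by simpa using Finsupp.single_le_iff.mp hle
    have := he v hv
    omega
  · rfl

lemma mem_MA_of_bad {A : Finset (Fin n)} {q : Ring' K n}
    (h : ∀ d ∈ q.support, ¬ good A d) :
    q ∈ Ideal.span ((· ^ 2) '' SA (K := K) A) := by
  rw [← support_sum_monomial_coeff q]
  apply Submodule.sum_mem
  intro d hd
  obtain ⟨v, hv, h2⟩ : ∃ v ∈ AV A, 2 ≤ d v := by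
    have hb := h d hd
    unfold good at hb
    push_neg at hb
    obtain ⟨v, hv1, hv2⟩ := hb
    exact ⟨v, hv1, by omega⟩
  have hle : Finsupp.single v 2 ≤ d := Finsupp.single_le_iff.mpr h2
  have hmon : (monomial d (coeff d q) : Ring' K n)
      = (X v ^ 2) * monomial (d - Finsupp.single v 2) (coeff d q) := by
    rw [X_pow_eq_monomial, monomial_mul, one_mul, add_tsub_cancel_of_le hle]
  rw [hmon]
  apply Ideal.mul_mem_right
  apply Ideal.subset_span
  rcases v with a | a
  · exact ⟨xv a, ⟨a, hv, Or.inl rfl⟩, rfl⟩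
  · exact ⟨yv a, ⟨a, hv, Or.inr rfl⟩, rfl⟩

lemma sub_Tm_mem (A : Finset (Fin n)) (p : Ring' K n) :
    p - Tm A p ∈ Ideal.span ((· ^ 2) '' SA (K := K) A) := by
  apply mem_MA_of_bad
  intro d hd hgood
  apply MvPolynomial.mem_support_iff.mp hd
  rw [coeff_sub, coeff_Tm, if_pos hgood, sub_self]

lemma fb_supported {A B : Finset (Fin n)} (hdisj : Disjoint A B) {a b : Fin n}
    (ha : a ∈ B) (hb : b ∈ B) : (fb a b : Ring' K n) ∈ supported K ((AV A)ᶜ) := by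
  have hX : ∀ i ∈ B, ∀ v : Fin n ⊕ Fin n,
      (v = Sum.inl i ∨ v = Sum.inr i) → (X v : Ring' K n) ∈ supported K ((AV A)ᶜ) := by
    intro i hi v hv
    refine X_mem_supported.mpr ?_
    have hiA : i ∉ A := Finset.disjoint_right.mp hdisj hi
    rcases hv with rfl | rfl <;> exact hiA
  rw [fb, xv, xv, yv, yv]
  exact sub_mem
    (mul_mem (hX a ha _ (Or.inl rfl)) (hX b hb _ (Or.inr rfl)))
    (mul_mem (hX b hb _ (Or.inl rfl)) (hX a ha _ (Or.inr rfl)))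

lemma Tm_mem_Q {A B : Finset (Fin n)} (hdisj : Disjoint A B) {w : Ring' K n}
    (hw : w ∈ Ideal.span ((· ^ 2) '' SA (K := K) A) ⊔ Ideal.span ((· ^ 2) '' SB (K := K) B)) :
    Tm A w ∈ Ideal.span ((· ^ 2) '' SB (K := K) B) := by
  obtain ⟨m, hm, q, hq, rfl⟩ := Submodule.mem_sup.mp hw
  rw [map_add]
  have h1 : Tm A m = 0 := by
    obtain ⟨c, hc, rfl⟩ := Submodule.mem_span_set.mp hm
    rw [map_finsuppSum]
    apply Finset.sum_eq_zero
    intro g hg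
    obtain ⟨g0, hg0, rfl⟩ := hc hg
    obtain ⟨a, ha, h⟩ := hg0
    have hAa : ∀ v : Fin n ⊕ Fin n, (v = Sum.inl a ∨ v = Sum.inr a) → v ∈ AV A := by
      rintro v (rfl | rfl) <;> exact ha
    rcases h with rfl | rfl
    · simp only [smul_eq_mul]
      exact Tm_sq_mul _ (hAa _ (Or.inl rfl))
    · simp only [smul_eq_mul]
      exact Tm_sq_mul _ (hAa _ (Or.inr rfl))
  have h2 : Tm A q ∈ Ideal.span ((· ^ 2) '' SB (K := K) B) := by
    obtain ⟨c, hc, rfl⟩ := Submodule.mem_span_set.mp hq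
    rw [map_finsuppSum]
    apply Submodule.sum_mem
    intro g hg
    obtain ⟨g0, hg0, rfl⟩ := hc hg
    obtain ⟨a, ha, b, hb, hab, rfl⟩ := hg0
    have hsup : ((fb a b : Ring' K n) ^ 2) ∈ supported K ((AV A)ᶜ) :=
      pow_mem (fb_supported hdisj ha hb) 2
    simp only [smul_eq_mul]
    rw [Tm_mul _ _ hsup]
    exact Ideal.mul_mem_left _ _ (Ideal.subset_span ⟨fb a b, ⟨a, ha, b, hb, hab, rfl⟩, rfl⟩)
  rw [h1, zero_add]
  exact h2

end Aux

/-- in characteristic `2`, with `P = P(A,B)` for disjoint `A, B` and a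
graph `G` all of whose edges have both endpoints in `B`, one has
`P^{[2]} : J_G = P^{[2]} + (P(∅,B)^{[2]} : J_G)`. -/
theorem reduction_of_colon_computation (k : Type*) [Field k] [CharP k 2] (n : ℕ)
    (A B : Finset (Fin n)) (hdisj : Disjoint A B)
    (G : SimpleGraph (Fin n)) (hGB : ∀ i j : Fin n, G.Adj i j → i ∈ B ∧ j ∈ B) :
    Submodule.colon (frobPow (PAB (k := k) A B) 2) (beIdeal (k := k) G)
      = frobPow (PAB (k := k) A B) 2 ⊔
          Submodule.colon (frobPow (PAB (k := k) (∅ : Finset (Fin n)) B) 2)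
            (beIdeal (k := k) G) := by
  have hP2 : frobPow (PAB (k := k) A B) 2
      = Ideal.span ((· ^ 2) '' SA (K := k) A) ⊔ Ideal.span ((· ^ 2) '' SB (K := k) B) := by
    rw [show PAB (k := k) A B = Ideal.span (SA (K := k) A ∪ SB (K := k) B) from rfl,
      frobPow_span, Set.image_union, Ideal.span_union]
  have hQ2 : frobPow (PAB (k := k) (∅ : Finset (Fin n)) B) 2
      = Ideal.span ((· ^ 2) '' SB (K := k) B) := by
    have hSA : SA (K := k) (∅ : Finset (Fin n)) = (∅ : Set (Ring' k n)) := by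
      ext g; simp [SA]
    rw [show PAB (k := k) (∅ : Finset (Fin n)) B
        = Ideal.span (SA (K := k) (∅ : Finset (Fin n)) ∪ SB (K := k) B) from rfl,
      hSA, Set.empty_union, frobPow_span]
  apply le_antisymm
  · intro r hr
    have hr' : ∀ f ∈ beIdeal (k := k) G,
        r * f ∈ Ideal.span ((· ^ 2) '' SA (K := k) A) ⊔ Ideal.span ((· ^ 2) '' SB (K := k) B) := by
      intro f hf
      rw [← hP2]
      simpa [smul_eq_mul] using Submodule.mem_colon.mp hr f hf
    have h2 : Tm A r ∈ Submodule.colon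
        (frobPow (PAB (k := k) (∅ : Finset (Fin n)) B) 2) (beIdeal (k := k) G) := by
      rw [hQ2, Submodule.mem_colon]
      intro f hf
      rw [smul_eq_mul]
      rw [show beIdeal (k := k) G
        = Ideal.span {g | ∃ i j, G.Adj i j ∧ g = fb i j} from rfl] at hf
      induction hf using Submodule.span_induction with
      | mem g hg =>
          obtain ⟨i, j, hij, rfl⟩ := hg
          have hsup : (fb i j : Ring' k n) ∈ supported k ((AV A)ᶜ) :=
            fb_supported hdisj (hGB i j hij).1 (hGB i j hij).2
          rw [← Tm_mul _ _ hsup]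
          exact Tm_mem_Q hdisj (hr' (fb i j) (Ideal.subset_span ⟨i, j, hij, rfl⟩))
      | zero => simp
      | add f g _ _ hf1 hg1 => rw [mul_add]; exact add_mem hf1 hg1
      | smul a f _ hf1 =>
          rw [smul_eq_mul, mul_left_comm]
          exact Ideal.mul_mem_left _ _ hf1
    have hdec : r = (r - Tm A r) + Tm A r := by ring
    rw [hdec]
    apply Submodule.add_mem
    · apply Submodule.mem_sup_left
      rw [hP2]
      exact Submodule.mem_sup_left (sub_Tm_mem A r)
    · exact Submodule.mem_sup_right h2
  · apply sup_le
    · intro r hr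
      rw [Submodule.mem_colon]
      intro f hf
      rw [smul_eq_mul]
      exact Ideal.mul_mem_right _ _ hr
    · intro r hr
      rw [Submodule.mem_colon] at hr ⊢
      intro f hf
      have hle : frobPow (PAB (k := k) (∅ : Finset (Fin n)) B) 2
          ≤ frobPow (PAB (k := k) A B) 2 := by
        rw [hQ2, hP2]; exact le_sup_right
      exact hle (hr f hf)

end BEI
end
end

section
/- Let G be a weakly closed finite simple graph and let v be a vertex of G. Then the vertex deletion G∖v, the completion G_v, and the graph G_v∖v (the completion at v with v deleted) are all weakly closed. -/
noncomputable section

namespace BEI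

/-- A finite simple graph `G` is weakly closed if there is a bijective labeling of its
vertices by `1,…,|V(G)|` such that for every edge `{a,b}` with `σ a < σ b` and every
vertex `c` with `σ a < σ c < σ b`, at least one of `{a,c}`, `{c,b}` is an edge of `G`. -/
def WeaklyClosed {V : Type*} [Fintype V] (G : SimpleGraph V) : Prop :=
  ∃ σ : V ≃ Fin (Fintype.card V), ∀ a b c : V,
    G.Adj a b → σ a < σ c → σ c < σ b → (G.Adj a c ∨ G.Adj c b)

/-- The completion `G_v` of `G` at the vertex `v`: all pairs of distinct neighbors of `v`
are made adjacent. -/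
def completion {V : Type*} (G : SimpleGraph V) (v : V) : SimpleGraph V :=
  G ⊔ SimpleGraph.fromRel (fun a b => G.Adj v a ∧ G.Adj v b)

/-- If the weak-closure condition holds with respect to any injective labeling into ℕ,
then the graph is weakly closed. -/
lemma weaklyClosed_of_inj {V : Type*} [Fintype V] (G : SimpleGraph V) (ρ : V → ℕ)
    (hinj : Function.Injective ρ)
    (h : ∀ a b c : V, G.Adj a b → ρ a < ρ c → ρ c < ρ b → G.Adj a c ∨ G.Adj c b) :
    WeaklyClosed G := by
  letI : LinearOrder V := LinearOrder.lift' ρ hinj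
  have hlt : ∀ a b : V, a < b ↔ ρ a < ρ b := by
    intro a b
    rw [lt_iff_le_not_ge, lt_iff_le_not_ge]
    exact Iff.rfl
  let σ : Fin (Fintype.card V) ≃o V := Fintype.orderIsoFinOfCardEq V rfl
  refine ⟨σ.symm.toEquiv, ?_⟩
  intro a b c hab hac hcb
  have h1 : ρ a < ρ c := (hlt a c).mp (σ.symm.lt_iff_lt.mp hac)
  have h2 : ρ c < ρ b := (hlt c b).mp (σ.symm.lt_iff_lt.mp hcb)
  exact h a b c hab h1 h2

/-- Weak closure is inherited by induced subgraphs. -/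
lemma weaklyClosed_induce {V : Type*} [Fintype V] (G : SimpleGraph V)
    (h : WeaklyClosed G) (s : Set V) [Fintype s] :
    WeaklyClosed (G.induce s) := by
  obtain ⟨σ, hσ⟩ := h
  refine weaklyClosed_of_inj _ (fun u => (σ u.1).val) ?_ ?_
  · intro a b hab
    exact Subtype.ext (σ.injective (Fin.val_injective hab))
  · intro a b c hab hac hcb
    exact hσ a.1 b.1 c.1 hab hac hcb

lemma weaklyClosed_completion {V : Type*} [Fintype V] (G : SimpleGraph V) (v : V)
    (h : WeaklyClosed G) : WeaklyClosed (completion G v) := by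
  obtain ⟨σ, hσ⟩ := h
  have hliftG : ∀ {a b : V}, G.Adj a b → (completion G v).Adj a b := fun hab =>
    (SimpleGraph.sup_adj _ _ _ _).mpr (Or.inl hab)
  have hliftC : ∀ {a b : V}, a ≠ b → G.Adj v a → G.Adj v b → (completion G v).Adj a b :=
    fun hne ha hb => (SimpleGraph.sup_adj _ _ _ _).mpr
      (Or.inr ((SimpleGraph.fromRel_adj _ _ _).mpr ⟨hne, Or.inl ⟨ha, hb⟩⟩))
  refine ⟨σ, ?_⟩
  intro a b c hab hac hcb
  have hnac : a ≠ c := fun e => by subst e; exact lt_irrefl _ hac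
  have hncb : c ≠ b := fun e => by subst e; exact lt_irrefl _ hcb
  rcases (SimpleGraph.sup_adj _ _ _ _).mp hab with hab' | hab'
  · exact (hσ a b c hab' hac hcb).imp hliftG hliftG
  · rcases (SimpleGraph.fromRel_adj _ _ _).mp hab' with ⟨_, hr⟩
    have hva : G.Adj v a := by rcases hr with ⟨h1, _⟩ | ⟨_, h1⟩ <;> exact h1
    have hvb : G.Adj v b := by rcases hr with ⟨_, h1⟩ | ⟨h1, _⟩ <;> exact h1
    by_cases hcv : c = v
    · subst hcv
      exact Or.inl (hliftG hva.symm)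
    · rcases lt_trichotomy (σ c) (σ v) with hlt | heq | hlt
      · rcases hσ a v c hva.symm hac hlt with h1 | h1
        · exact Or.inl (hliftG h1)
        · exact Or.inl (hliftC hnac hva h1.symm)
      · exact absurd (σ.injective heq) hcv
      · rcases hσ v b c hvb hlt hcb with h1 | h1
        · exact Or.inl (hliftC hnac hva h1)
        · exact Or.inr (hliftG h1)

/-- if `G` is weakly closed and `v` is a vertex of `G`, then the vertex
deletion `G∖v`, the completion `G_v`, and `G_v∖v` are all weakly closed. -/
theorem weaklyClosed_deletion_completion {V : Type*} [Fintype V] [DecidableEq V]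
    (G : SimpleGraph V) (v : V) (h : WeaklyClosed G) :
    WeaklyClosed (G.induce {u : V | u ≠ v}) ∧
      WeaklyClosed (completion G v) ∧
        WeaklyClosed ((completion G v).induce {u : V | u ≠ v}) := by
  refine ⟨weaklyClosed_induce G h _, weaklyClosed_completion G v h, ?_⟩
  exact weaklyClosed_induce _ (weaklyClosed_completion G v h) _

end BEI
end
end
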